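/- arXiv:0711.0451 — 7 statements merged into one kernel-verified Lean document; each statement's English description precedes it below -/
import Mathlib

section
/- Let 1 ≤ p < ∞. The similarity operator G is a contraction on L_p[0,1] (i.e., there exists q < 1 with ‖G(f) − G(g)‖_{L_p} ≤ q‖f − g‖_{L_p} for all f, g ∈ L_p[0,1]) if and only if ∑_{k=1}^n a_k|d_k|^p < 1. -/
open MeasureTheory Set Filter
open scoped ENNReal NNReal

/-- Breakpoints: `alphaOf a k = α_k = ∑_{i=1}^{k-1} a_i`, so `α_1 = 0`. -/
noncomputable def alphaOf (a : ℕ → ℝ) (k : ℕ) : ℝ := ∑ i ∈ Finset.Ico 1 k, a i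

/-- The similarity operator `G`: on `(α_k, α_{k+1})` it takes the value
`β_k + d_k · f((x − α_k)/a_k)`, and `0` outside `⋃ (α_k, α_{k+1})`. -/
noncomputable def simOp (n : ℕ) (a d β : ℕ → ℝ) (f : ℝ → ℝ) : ℝ → ℝ :=
  fun x => ∑ k ∈ Finset.Icc 1 n,
    Set.indicator (Set.Ioo (alphaOf a k) (alphaOf a (k + 1)))
      (fun y => β k + d k * f ((y - alphaOf a k) / a k)) x

lemma alphaOf_one (a : ℕ → ℝ) : alphaOf a 1 = 0 := by simp [alphaOf]

lemma alphaOf_succ (a : ℕ → ℝ) (k : ℕ) (hk : 1 ≤ k) :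
    alphaOf a (k + 1) = alphaOf a k + a k := Finset.sum_Ico_succ_top hk a

lemma alphaOf_top (n : ℕ) (a : ℕ → ℝ) (hsum : ∑ k ∈ Finset.Icc 1 n, a k = 1) :
    alphaOf a (n + 1) = 1 := by
  rw [alphaOf, Finset.Ico_add_one_right_eq_Icc]; exact hsum

lemma alphaOf_mono (n : ℕ) (a : ℕ → ℝ) (ha : ∀ k ∈ Finset.Icc 1 n, 0 < a k)
    {j k : ℕ} (h1 : 1 ≤ j) (hjk : j ≤ k) (hk : k ≤ n + 1) :
    alphaOf a j ≤ alphaOf a k := by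
  rw [alphaOf, alphaOf, ← Finset.sum_Ico_consecutive _ h1 hjk]
  have : 0 ≤ ∑ i ∈ Finset.Ico j k, a i := by
    refine Finset.sum_nonneg fun i hi => ?_
    rw [Finset.mem_Ico] at hi
    exact (ha i (Finset.mem_Icc.2 ⟨le_trans h1 hi.1, by omega⟩)).le
  linarith

lemma disj_aux (n : ℕ) (a : ℕ → ℝ) (ha : ∀ k ∈ Finset.Icc 1 n, 0 < a k)
    {j k : ℕ} (hj : 1 ≤ j) (hjk : j < k) (hk : k ≤ n) :
    Disjoint (Set.Ioo (alphaOf a j) (alphaOf a (j + 1)))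
      (Set.Ioo (alphaOf a k) (alphaOf a (k + 1))) := by
  refine Set.disjoint_left.2 fun x hx hx' => ?_
  have h1 : alphaOf a (j + 1) ≤ alphaOf a k := alphaOf_mono n a ha (by omega) (by omega) (by omega)
  exact absurd (hx.2.trans_le h1) (not_lt.2 hx'.1.le)

lemma pd (n : ℕ) (a : ℕ → ℝ) (ha : ∀ k ∈ Finset.Icc 1 n, 0 < a k) :
    Set.PairwiseDisjoint (↑(Finset.Icc 1 n) : Set ℕ)
      (fun k => Set.Ioo (alphaOf a k) (alphaOf a (k + 1))) := by
  intro j hj k hk hjk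
  simp only [Finset.coe_Icc, Set.mem_Icc] at hj hk
  rcases hjk.lt_or_gt with h | h
  · exact disj_aux n a ha hj.1 h hk.2
  · exact (disj_aux n a ha hk.1 h hj.2).symm

lemma ioo_subset (n : ℕ) (a : ℕ → ℝ) (ha : ∀ k ∈ Finset.Icc 1 n, 0 < a k)
    (hsum : ∑ k ∈ Finset.Icc 1 n, a k = 1) {k : ℕ} (hk : k ∈ Finset.Icc 1 n) :
    Set.Ioo (alphaOf a k) (alphaOf a (k + 1)) ⊆ Set.Icc (0:ℝ) 1 := by
  rw [Finset.mem_Icc] at hk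
  intro x hx
  have h0 : (0:ℝ) = alphaOf a 1 := (alphaOf_one a).symm
  have h1 : alphaOf a 1 ≤ alphaOf a k := alphaOf_mono n a ha le_rfl hk.1 (by omega)
  have h2 : alphaOf a (k + 1) ≤ alphaOf a (n + 1) :=
    alphaOf_mono n a ha (by omega) (by omega) le_rfl
  rw [alphaOf_top n a hsum] at h2
  exact ⟨by rw [h0]; linarith [hx.1], by linarith [hx.2]⟩

lemma simOp_of_not_mem (n : ℕ) (a d β : ℕ → ℝ) (f : ℝ → ℝ) {x : ℝ}
    (hx : ∀ k ∈ Finset.Icc 1 n, x ∉ Set.Ioo (alphaOf a k) (alphaOf a (k + 1))) :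
    simOp n a d β f x = 0 :=
  Finset.sum_eq_zero fun k hk => Set.indicator_of_notMem (hx k hk) _

lemma simOp_of_mem (n : ℕ) (a d β : ℕ → ℝ) (ha : ∀ k ∈ Finset.Icc 1 n, 0 < a k)
    (f : ℝ → ℝ) {k : ℕ} (hk : k ∈ Finset.Icc 1 n) {x : ℝ}
    (hx : x ∈ Set.Ioo (alphaOf a k) (alphaOf a (k + 1))) :
    simOp n a d β f x = β k + d k * f ((x - alphaOf a k) / a k) := by
  rw [simOp, Finset.sum_eq_single_of_mem k hk]
  · exact Set.indicator_of_mem hx _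
  · intro j hj hjk
    exact Set.indicator_of_notMem
      (Set.disjoint_left.1 (pd n a ha hj hk hjk) · hx) _

lemma lintegral_affine (α c : ℝ) (hc : 0 < c) (F : ℝ → ℝ≥0∞) :
    ∫⁻ x in Set.Ioo α (α + c), F ((x - α) / c) =
      ENNReal.ofReal c * ∫⁻ y in Set.Ioo (0:ℝ) 1, F y := by
  set e : ℝ ≃ᵐ ℝ :=
    ((Homeomorph.addRight (-α)).trans
      (Homeomorph.mulRight₀ c⁻¹ (inv_ne_zero hc.ne'))).toMeasurableEquiv with he
  have heapp : ∀ x, e x = (x - α) / c := by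
    intro x
    simp [he, div_eq_mul_inv, sub_eq_add_neg]
  have hmap : Measure.map e volume = ENNReal.ofReal c • volume := by
    have hco : (⇑e) = (fun x => x * c⁻¹) ∘ (fun x => x + -α) := by
      funext x; simp [heapp x, div_eq_mul_inv, sub_eq_add_neg]
    rw [hco, ← Measure.map_map (by fun_prop) (by fun_prop),
      map_add_right_eq_self volume (-α),
      Real.map_volume_mul_right (inv_ne_zero hc.ne')]
    simp [abs_of_pos hc]
  have hpre : e ⁻¹' (Set.Ioo 0 1) = Set.Ioo α (α + c) := by
    ext x
    simp only [Set.mem_preimage, Set.mem_Ioo, heapp x]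
    rw [lt_div_iff₀ hc, div_lt_iff₀ hc]
    constructor <;> rintro ⟨h1, h2⟩ <;> constructor <;> linarith
  calc ∫⁻ x in Set.Ioo α (α + c), F ((x - α) / c)
      = ∫⁻ x in Set.Ioo α (α + c), F (e x) := by simp_rw [heapp]
    _ = ∫⁻ y, F y ∂(Measure.map e (volume.restrict (Set.Ioo α (α + c)))) :=
        (lintegral_map_equiv F e).symm
    _ = ENNReal.ofReal c * ∫⁻ y in Set.Ioo (0:ℝ) 1, F y := by
        rw [← hpre, ← Measure.restrict_map e.measurable measurableSet_Ioo, hmap,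
          Measure.restrict_smul, lintegral_smul_measure, smul_eq_mul]

lemma eLpNorm_simOp_sub (n : ℕ) (a d β : ℕ → ℝ)
    (ha : ∀ k ∈ Finset.Icc 1 n, 0 < a k)
    (hsum : ∑ k ∈ Finset.Icc 1 n, a k = 1)
    (p : ℝ≥0∞) (hp1 : 1 ≤ p) (hpt : p ≠ ⊤) (f g : ℝ → ℝ) :
    eLpNorm (simOp n a d β f - simOp n a d β g) p (volume.restrict (Set.Icc (0:ℝ) 1)) =
      (ENNReal.ofReal (∑ k ∈ Finset.Icc 1 n, a k * |d k| ^ p.toReal)) ^ (1 / p.toReal) *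
        eLpNorm (f - g) p (volume.restrict (Set.Icc (0:ℝ) 1)) := by
  have hp0 : p ≠ 0 := by positivity
  set r := p.toReal with hr
  have hrpos : 0 < r := ENNReal.toReal_pos hp0 hpt
  rw [eLpNorm_eq_lintegral_rpow_enorm_toReal hp0 hpt, eLpNorm_eq_lintegral_rpow_enorm_toReal hp0 hpt]
  simp only [enorm_eq_nnnorm]
  set I : ℕ → Set ℝ := fun k => Set.Ioo (alphaOf a k) (alphaOf a (k + 1)) with hI
  set S : Set ℝ := ⋃ k ∈ Finset.Icc 1 n, I k with hS
  have hSmeas : MeasurableSet S := by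
    exact Finset.measurableSet_biUnion _ fun k _ => measurableSet_Ioo
  have hSsub : S ⊆ Set.Icc (0:ℝ) 1 := by
    refine Set.iUnion₂_subset fun k hk => ioo_subset n a ha hsum hk
  set F : ℝ → ℝ≥0∞ := fun x =>
    (‖(simOp n a d β f - simOp n a d β g) x‖₊ : ℝ≥0∞) ^ r with hF
  set J : ℝ≥0∞ := ∫⁻ x in Set.Icc (0:ℝ) 1, (‖(f - g) x‖₊ : ℝ≥0∞) ^ r with hJ
  have hJIoo : ∫⁻ x in Set.Ioo (0:ℝ) 1, (‖(f - g) x‖₊ : ℝ≥0∞) ^ r = J :=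
    setLIntegral_congr Ioo_ae_eq_Icc
  -- step 1: F vanishes off S
  have hFzero : ∀ x, x ∉ S → F x = 0 := by
    intro x hx
    have hx' : ∀ k ∈ Finset.Icc 1 n, x ∉ I k := by
      intro k hk hmem
      exact hx (Set.mem_biUnion hk hmem)
    simp only [hF, Pi.sub_apply, simOp_of_not_mem n a d β f hx',
      simOp_of_not_mem n a d β g hx', sub_zero, nnnorm_zero, ENNReal.coe_zero]
    exact ENNReal.zero_rpow_of_pos hrpos
  have hstep1 : ∫⁻ x in Set.Icc (0:ℝ) 1, F x = ∫⁻ x in S, F x := by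
    have : ∀ x, F x = S.indicator F x := by
      intro x
      by_cases hx : x ∈ S
      · rw [Set.indicator_of_mem hx]
      · rw [Set.indicator_of_notMem hx, hFzero x hx]
    calc ∫⁻ x in Set.Icc (0:ℝ) 1, F x
        = ∫⁻ x in Set.Icc (0:ℝ) 1, S.indicator F x := by simp_rw [← this]
      _ = ∫⁻ x in S, F x ∂(volume.restrict (Set.Icc (0:ℝ) 1)) := lintegral_indicator hSmeas F
      _ = ∫⁻ x in S, F x := by
          rw [Measure.restrict_restrict hSmeas, Set.inter_eq_self_of_subset_left hSsub]
  -- step 2: split the union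
  have hstep2 : ∫⁻ x in S, F x = ∑ k ∈ Finset.Icc 1 n, ∫⁻ x in I k, F x := by
    rw [hS]
    exact lintegral_biUnion_finset (pd n a ha) (fun k _ => measurableSet_Ioo) F
  -- step 3: each piece
  have hstep3 : ∀ k ∈ Finset.Icc 1 n,
      ∫⁻ x in I k, F x = ENNReal.ofReal (a k * |d k| ^ r) * J := by
    intro k hk
    have hk1 : 1 ≤ k := (Finset.mem_Icc.1 hk).1
    have hak : 0 < a k := ha k hk
    have hcongr : ∫⁻ x in I k, F x = ∫⁻ x in I k,
        (‖d k‖₊ : ℝ≥0∞) ^ r * (‖(f - g) ((x - alphaOf a k) / a k)‖₊ : ℝ≥0∞) ^ r := by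
      refine setLIntegral_congr_fun_ae measurableSet_Ioo (Filter.Eventually.of_forall ?_)
      intro x hx
      have hDf := simOp_of_mem n a d β ha f hk hx
      have hDg := simOp_of_mem n a d β ha g hk hx
      simp only [hF, Pi.sub_apply, hDf, hDg]
      rw [show β k + d k * f ((x - alphaOf a k) / a k) -
            (β k + d k * g ((x - alphaOf a k) / a k)) =
          d k * (f ((x - alphaOf a k) / a k) - g ((x - alphaOf a k) / a k)) by ring]
      rw [nnnorm_mul, ENNReal.coe_mul,
        ENNReal.mul_rpow_of_nonneg _ _ hrpos.le]
    rw [hcongr, lintegral_const_mul' _ _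
      (ENNReal.rpow_ne_top_of_nonneg hrpos.le ENNReal.coe_ne_top)]
    have hIk : I k = Set.Ioo (alphaOf a k) (alphaOf a k + a k) := by
      rw [hI]; simp [alphaOf_succ a k hk1]
    rw [hIk, lintegral_affine (alphaOf a k) (a k) hak
      (fun y => (‖(f - g) y‖₊ : ℝ≥0∞) ^ r), hJIoo]
    have hd : (‖d k‖₊ : ℝ≥0∞) ^ r = ENNReal.ofReal (|d k| ^ r) := by
      rw [← enorm_eq_nnnorm, Real.enorm_eq_ofReal_abs, ENNReal.ofReal_rpow_of_nonneg (abs_nonneg _) hrpos.le]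
    rw [hd, ENNReal.ofReal_mul hak.le]
    ring
  rw [hstep1, hstep2, Finset.sum_congr rfl hstep3, ← Finset.sum_mul,
    ← ENNReal.ofReal_sum_of_nonneg (fun k hk => mul_nonneg (ha k hk).le (by positivity)),
    ENNReal.mul_rpow_of_nonneg _ _ (by positivity)]

/-- for `1 ≤ p < ∞`, the similarity operator `G` is a contraction on
`L_p[0,1]` iff `∑_{k=1}^n a_k |d_k|^p < 1`. -/
theorem simOp_contraction_iff (n : ℕ) (hn : 1 < n) (a d β : ℕ → ℝ)
    (ha : ∀ k ∈ Finset.Icc 1 n, 0 < a k)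
    (hsum : ∑ k ∈ Finset.Icc 1 n, a k = 1)
    (p : ℝ≥0∞) (hp1 : 1 ≤ p) (hpt : p ≠ ⊤) :
    (∃ q : ℝ≥0, q < 1 ∧ ∀ f g : ℝ → ℝ,
        MemLp f p (volume.restrict (Set.Icc (0:ℝ) 1)) →
        MemLp g p (volume.restrict (Set.Icc (0:ℝ) 1)) →
        eLpNorm (simOp n a d β f - simOp n a d β g) p (volume.restrict (Set.Icc (0:ℝ) 1)) ≤
          (q : ℝ≥0∞) * eLpNorm (f - g) p (volume.restrict (Set.Icc (0:ℝ) 1))) ↔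
      ∑ k ∈ Finset.Icc 1 n, a k * |d k| ^ p.toReal < 1 := by
  have hp0 : p ≠ 0 := by positivity
  set r := p.toReal with hr
  have hrpos : 0 < r := ENNReal.toReal_pos hp0 hpt
  set C : ℝ := ∑ k ∈ Finset.Icc 1 n, a k * |d k| ^ r with hC
  have hCnn : 0 ≤ C :=
    Finset.sum_nonneg fun k hk => mul_nonneg (ha k hk).le (by positivity)
  have hμuniv : (volume.restrict (Set.Icc (0:ℝ) 1)) Set.univ = 1 := by
    rw [Measure.restrict_apply_univ]
    simp [Real.volume_Icc]
  haveI : IsFiniteMeasure (volume.restrict (Set.Icc (0:ℝ) 1)) :=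
    ⟨by rw [hμuniv]; exact ENNReal.one_lt_top⟩
  have hμne : (volume.restrict (Set.Icc (0:ℝ) 1)) ≠ 0 := by
    intro h
    rw [h] at hμuniv
    simp at hμuniv
  constructor
  · rintro ⟨q, hq, hcon⟩
    have hone : eLpNorm ((fun _ : ℝ => (1:ℝ)) - (0 : ℝ → ℝ)) p
        (volume.restrict (Set.Icc (0:ℝ) 1)) = 1 := by
      have : ((fun _ : ℝ => (1:ℝ)) - (0 : ℝ → ℝ)) = fun _ : ℝ => (1:ℝ) := by
        funext x; simp
      rw [this, eLpNorm_const (1:ℝ) hp0 hμne, hμuniv]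
      simp
    have h1 := hcon (fun _ => (1:ℝ)) 0 (memLp_const 1) (MemLp.zero)
    rw [hone, mul_one,
      eLpNorm_simOp_sub n a d β ha hsum p hp1 hpt (fun _ => (1:ℝ)) 0, hone, mul_one] at h1
    have hlt : (ENNReal.ofReal C) ^ (1 / r) < 1 := lt_of_le_of_lt h1 (by exact_mod_cast hq)
    have : ENNReal.ofReal C < 1 := by
      have h2 : ((ENNReal.ofReal C) ^ (1 / r)) ^ r < 1 :=
        ENNReal.rpow_lt_one hlt hrpos
      rwa [← ENNReal.rpow_mul, one_div, inv_mul_cancel₀ hrpos.ne', ENNReal.rpow_one] at h2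
    rwa [ENNReal.ofReal_lt_one] at this
  · intro hCone
    have hxlt : (ENNReal.ofReal C) ^ (1 / r) < 1 :=
      ENNReal.rpow_lt_one (ENNReal.ofReal_lt_one.2 hCone) (by positivity)
    have hxne : (ENNReal.ofReal C) ^ (1 / r) ≠ ⊤ :=
      ENNReal.rpow_ne_top_of_nonneg (by positivity) ENNReal.ofReal_ne_top
    refine ⟨((ENNReal.ofReal C) ^ (1 / r)).toNNReal, ?_, ?_⟩
    · have := ENNReal.coe_toNNReal hxne
      rw [← ENNReal.coe_lt_one_iff, this]
      exact hxlt
    · intro f g hf hg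
      rw [eLpNorm_simOp_sub n a d β ha hsum p hp1 hpt f g, ENNReal.coe_toNNReal hxne]
end

section
/- Let f ∈ L_p[0,1] (1 ≤ p < ∞) be self-similar of zero spectral order with singular point x̂ = α_{k̂}/(1−a_{k̂}). Then f agrees almost everywhere with a function g on [0,1] such that: (i) g takes at most countably many values and is constant on each member of a countable family of intervals whose union is [0,1]∖{x̂}; (ii) at every point x ≠ x̂ the finite one-sided limits g(x−0) and g(x+0) exist, so every discontinuity of g other than possibly x̂ is a jump discontinuity; (iii) the set of discontinuity points of g is at most countable. -/
open MeasureTheory Set Filter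
open scoped ENNReal NNReal

/-- Values of the piecewise-constant function, defined recursively. -/
noncomputable def cseq (bh dh z : ℝ) : ℕ → ℝ
  | 0 => z
  | (m + 1) => bh + dh * cseq bh dh z m

open scoped Classical in
/-- A generic piecewise constant function: value `c m k` on `J m k` for valid `k`. -/
noncomputable def pcFun (c : ℕ → ℕ → ℝ) (J : ℕ → ℕ → Set ℝ) (V : ℕ → Prop) : ℝ → ℝ :=
  fun x => if h : ∃ q : ℕ × ℕ, V q.2 ∧ x ∈ J q.1 q.2 then c h.choose.1 h.choose.2 else 0

lemma pcFun_eq {c : ℕ → ℕ → ℝ} {J : ℕ → ℕ → Set ℝ} {V : ℕ → Prop}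
    (huniq : ∀ m k m' k' x, V k → V k' → x ∈ J m k → x ∈ J m' k' → m = m' ∧ k = k')
    {m k : ℕ} {x : ℝ} (hV : V k) (hx : x ∈ J m k) : pcFun c J V x = c m k := by
  have hh : ∃ q : ℕ × ℕ, V q.2 ∧ x ∈ J q.1 q.2 := ⟨(m, k), hV, hx⟩
  simp only [pcFun, dif_pos hh]
  obtain ⟨h1, h2⟩ := hh.choose_spec
  obtain ⟨e1, e2⟩ := huniq _ _ _ _ _ h1 hV h2 hx
  rw [e1, e2]

lemma pcFun_mem {c : ℕ → ℕ → ℝ} {J : ℕ → ℕ → Set ℝ} {V : ℕ → Prop} (x : ℝ) :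
    pcFun c J V x ∈ insert (0:ℝ) (Set.range fun q : ℕ × ℕ => c q.1 q.2) := by
  simp only [pcFun]
  split
  · exact Set.mem_insert_of_mem _ ⟨_, rfl⟩
  · exact Set.mem_insert _ _

lemma qmp_affine (cc b : ℝ) (hc : cc ≠ 0) :
    Measure.QuasiMeasurePreserving (fun x : ℝ => cc * x + b) volume volume := by
  have hmeas : Measurable (fun x : ℝ => cc * x + b) :=
    (measurable_const_mul cc).add_const b
  refine ⟨hmeas, ?_⟩
  have h2 : Measure.map (fun x : ℝ => cc * x + b) volume
      = Measure.map (fun y : ℝ => y + b) (Measure.map (cc * ·) volume) := by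
    rw [Measure.map_map (measurable_add_const b) (measurable_const_mul cc)]
    rfl
  rw [h2, Real.map_volume_mul_left hc, Measure.map_smul, map_add_right_eq_self volume b]
  intro s hs
  simp [hs]

set_option maxHeartbeats 4000000 in
/-- a self-similar function of zero spectral order agrees a.e. with a
piecewise-constant function `g` taking at most countably many values, constant on each
member of a countable family of intervals covering `[0,1] ∖ {x̂}`, having finite one-sided
limits at every `x ≠ x̂` (so all discontinuities except possibly `x̂` are jumps), and whose
set of discontinuity points is at most countable. -/
theorem selfSimilar_zeroOrder_structure
    (n : ℕ) (hn : 1 < n) (a d β : ℕ → ℝ)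
    (ha : ∀ k ∈ Finset.Icc 1 n, 0 < a k)
    (hsum : ∑ k ∈ Finset.Icc 1 n, a k = 1)
    (p : ℝ≥0∞) (hp1 : 1 ≤ p) (hpt : p ≠ ⊤)
    (khat : ℕ) (hk : khat ∈ Finset.Icc 1 n)
    (hdk : d khat ≠ 0)
    (hd0 : ∀ k ∈ Finset.Icc 1 n, k ≠ khat → d k = 0)
    (hβ : ∃ k ∈ Finset.Icc 1 n, β k ≠ 0)
    (hcontr : a khat * |d khat| ^ p.toReal < 1)
    (f : ℝ → ℝ) (hf : MemLp f p (volume.restrict (Set.Icc (0:ℝ) 1)))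
    (hfix : f =ᵐ[volume.restrict (Set.Icc (0:ℝ) 1)] simOp n a d β f)
    (xhat : ℝ) (hxhat : xhat = alphaOf a khat / (1 - a khat)) :
    ∃ g : ℝ → ℝ,
      f =ᵐ[volume.restrict (Set.Icc (0:ℝ) 1)] g ∧
      (g '' Set.Icc (0:ℝ) 1).Countable ∧
      (∃ 𝒥 : Set (Set ℝ), 𝒥.Countable ∧
        (∀ I ∈ 𝒥, I.OrdConnected) ∧
        ⋃₀ 𝒥 = Set.Icc (0:ℝ) 1 \ {xhat} ∧
        (∀ I ∈ 𝒥, ∀ x ∈ I, ∀ y ∈ I, g x = g y)) ∧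
      (∀ x ∈ Set.Icc (0:ℝ) 1, x ≠ xhat →
        (∃ L : ℝ, Filter.Tendsto g (nhdsWithin x (Set.Icc (0:ℝ) 1 ∩ Set.Iio x)) (nhds L)) ∧
        (∃ L : ℝ, Filter.Tendsto g (nhdsWithin x (Set.Icc (0:ℝ) 1 ∩ Set.Ioi x)) (nhds L))) ∧
      {x ∈ Set.Icc (0:ℝ) 1 | ¬ ContinuousWithinAt g (Set.Icc (0:ℝ) 1) x}.Countable := by
  classical
  obtain ⟨hk1, hkn⟩ := Finset.mem_Icc.mp hk
  -- globalize the fixed point equation, then discard analytic hypotheses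
  have Hglob : ∀ᵐ x ∂(volume : Measure ℝ), x ∈ Set.Icc (0:ℝ) 1 → f x = simOp n a d β f x :=
    ae_imp_of_ae_restrict hfix
  clear hf hfix hβ hcontr hp1 hpt hdk
  clear p
  obtain ⟨α, hαdef⟩ : ∃ α : ℕ → ℝ, α = alphaOf a := ⟨_, rfl⟩
  -- basic facts about α
  have hα1 : α 1 = 0 := by simp [hαdef, alphaOf]
  have hαsucc : ∀ k, 1 ≤ k → α (k + 1) = α k + a k := by
    intro k hk'
    simp only [hαdef, alphaOf]
    rw [Finset.sum_Ico_succ_top hk']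
  have hαtop : α (n + 1) = 1 := by
    simp only [hαdef, alphaOf]
    rw [Finset.Ico_add_one_right_eq_Icc]
    exact hsum
  have hmono : ∀ {i j : ℕ}, i ≤ j → j ≤ n + 1 → α i ≤ α j := by
    intro i j hij hj
    simp only [hαdef, alphaOf]
    apply Finset.sum_le_sum_of_subset_of_nonneg
    · exact Finset.Ico_subset_Ico le_rfl hij
    · intro t ht _
      have ht' := Finset.mem_Ico.mp ht
      exact (ha t (Finset.mem_Icc.mpr ⟨ht'.1, by omega⟩)).le
  have hα0 : ∀ k, 1 ≤ k → k ≤ n + 1 → 0 ≤ α k := by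
    intro k h1 h2; rw [← hα1]; exact hmono h1 h2
  have hαle1 : ∀ k, k ≤ n + 1 → α k ≤ 1 := by
    intro k h2; rw [← hαtop]; exact hmono h2 le_rfl
  obtain ⟨a0, ha0def⟩ : ∃ x : ℝ, x = a khat := ⟨_, rfl⟩
  obtain ⟨b0, hb0def⟩ : ∃ x : ℝ, x = α khat := ⟨_, rfl⟩
  have hxhat' : xhat = b0 / (1 - a0) := by
    rw [hxhat, hb0def, ha0def, hαdef]
  have ha0 : 0 < a0 := by rw [ha0def]; exact ha khat hk
  have ha01 : a0 < 1 := by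
    have herase : a khat + ∑ j ∈ (Finset.Icc 1 n).erase khat, a j = 1 := by
      rw [Finset.add_sum_erase _ _ hk]; exact hsum
    have hpos : 0 < ∑ j ∈ (Finset.Icc 1 n).erase khat, a j := by
      apply Finset.sum_pos
      · intro i hi; exact ha i (Finset.mem_of_mem_erase hi)
      · have hcard : ((Finset.Icc 1 n).erase khat).card = n - 1 := by
          rw [Finset.card_erase_of_mem hk, Nat.card_Icc]; omega
        rw [← Finset.card_pos, hcard]; omega
    rw [ha0def]; linarith
  have hb0 : 0 ≤ b0 := by rw [hb0def]; exact hα0 khat hk1 (by omega)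
  have hb0a : α (khat + 1) = b0 + a0 := by
    rw [hαsucc khat hk1, hb0def, ha0def]
  have hba1 : b0 + a0 ≤ 1 := by rw [← hb0a]; exact hαle1 (khat + 1) (by omega)
  have hne1a : (1:ℝ) - a0 ≠ 0 := ne_of_gt (by linarith)
  have hxfix : b0 + a0 * xhat = xhat := by
    rw [hxhat']
    field_simp
    ring
  have hx0 : 0 ≤ xhat := by
    rw [hxhat']
    exact div_nonneg hb0 (by linarith)
  have hxle1 : xhat ≤ 1 := by
    rw [hxhat', div_le_one (by linarith)]
    linarith
  have hxb : b0 ≤ xhat := by nlinarith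
  have hx1 : xhat ≤ b0 + a0 := by nlinarith
  -- the affine maps
  obtain ⟨A, hAdef⟩ : ∃ A : ℕ → ℝ → ℝ, A = fun m y => xhat + a0 ^ m * (y - xhat) :=
    ⟨_, rfl⟩
  have hApow : ∀ m, 0 < a0 ^ m := fun m => pow_pos ha0 m
  have hApow1 : ∀ m, a0 ^ m ≤ 1 := fun m => pow_le_one₀ ha0.le ha01.le
  have hA0 : ∀ y, A 0 y = y := by intro y; simp [hAdef]
  have hASM : ∀ m, StrictMono (A m) := by
    intro m u v huv
    simp only [hAdef]
    have := hApow m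
    nlinarith
  have hAmono : ∀ m {u v : ℝ}, u ≤ v → A m u ≤ A m v := fun m {u v} h => (hASM m).monotone h
  have hAstep : ∀ m y, A (m + 1) y = b0 + a0 * A m y := by
    intro m y
    simp only [hAdef, pow_succ]
    nlinarith [hxfix]
  have hAcomp : ∀ s m y, A m (A s y) = A (m + s) y := by
    intro s m y
    simp only [hAdef, pow_add]
    ring
  have hAfix : ∀ m, A m xhat = xhat := by intro m; simp [hAdef]
  have hArange : ∀ m y, 0 ≤ y → y ≤ 1 → 0 ≤ A m y ∧ A m y ≤ 1 := by
    intro m y hy hy1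
    have h1 := hApow m
    have h2 := hApow1 m
    constructor
    · simp only [hAdef]; nlinarith
    · simp only [hAdef]; nlinarith
  have hAmid : ∀ s, 1 ≤ s → ∀ y, 0 ≤ y → y ≤ 1 → b0 ≤ A s y ∧ A s y ≤ b0 + a0 := by
    intro s hs y hy hy1
    have hq1 : 0 < a0 ^ s := hApow s
    have hqa : a0 ^ s ≤ a0 := by
      calc a0 ^ s ≤ a0 ^ 1 := pow_le_pow_of_le_one ha0.le ha01.le hs
      _ = a0 := pow_one a0
    constructor
    · simp only [hAdef]; nlinarith
    · simp only [hAdef]; nlinarith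
  -- the intervals and validity predicate
  obtain ⟨V, hVdef⟩ : ∃ V : ℕ → Prop, V = fun k => k ∈ Finset.Icc 1 n ∧ k ≠ khat :=
    ⟨_, rfl⟩
  obtain ⟨J, hJdef⟩ : ∃ J : ℕ → ℕ → Set ℝ,
      J = fun m k => Set.Ioo (A m (α k)) (A m (α (k + 1))) := ⟨_, rfl⟩
  have hVmem : ∀ k, V k ↔ (k ∈ Finset.Icc 1 n ∧ k ≠ khat) := by rw [hVdef]; intro k; rfl
  have hJmem : ∀ m k x, x ∈ J m k ↔ (A m (α k) < x ∧ x < A m (α (k + 1))) := by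
    rw [hJdef]; intro m k x; rfl
  have hVrange : ∀ k, V k → 1 ≤ k ∧ k ≤ n := by
    intro k hVk; exact Finset.mem_Icc.mp ((hVmem k).mp hVk).1
  have hVne : ∀ k, V k → k ≠ khat := fun k hVk => ((hVmem k).mp hVk).2
  have hαk01 : ∀ k, V k → (0 ≤ α k ∧ α (k+1) ≤ 1 ∧ α k < α (k+1)) := by
    intro k hVk
    obtain ⟨h1, h2⟩ := hVrange k hVk
    refine ⟨hα0 k h1 (by omega), hαle1 (k+1) (by omega), ?_⟩
    rw [hαsucc k h1]
    have := ha k ((hVmem k).mp hVk).1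
    linarith
  have hα01 : ∀ k, V k → (0 ≤ α k ∧ α k ≤ 1 ∧ 0 ≤ α (k+1) ∧ α (k+1) ≤ 1) := by
    intro k hVk
    obtain ⟨h0, h1, hlt⟩ := hαk01 k hVk
    exact ⟨h0, by linarith, by linarith, h1⟩
  have hJIcc : ∀ m k, V k → J m k ⊆ Set.Icc (0:ℝ) 1 := by
    intro m k hVk x hx
    rw [hJmem] at hx
    obtain ⟨h0, h1, h2, h3⟩ := hα01 k hVk
    obtain ⟨hl, hr⟩ := hx
    have hL := (hArange m (α k) h0 h1).1
    have hR := (hArange m (α (k+1)) h2 h3).2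
    exact ⟨le_trans hL hl.le, le_trans hr.le hR⟩
  -- xhat is not in any J m k
  have hxnotJ : ∀ m k, V k → xhat ∉ J m k := by
    intro m k hVk hmem
    rw [hJmem] at hmem
    obtain ⟨hl, hr⟩ := hmem
    have hl' : A m (α k) < A m xhat := by rw [hAfix m]; exact hl
    have hr' : A m xhat < A m (α (k+1)) := by rw [hAfix m]; exact hr
    have h1 : α k < xhat := (hASM m).lt_iff_lt.mp hl'
    have h2 : xhat < α (k+1) := (hASM m).lt_iff_lt.mp hr'
    obtain ⟨hk1', hkn'⟩ := hVrange k hVk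
    rcases lt_or_gt_of_ne (hVne k hVk) with h | h
    · have h3 : α (k+1) ≤ α khat := hmono (by omega) (by omega)
      have h4 : α khat = b0 := hb0def.symm
      linarith
    · have h3 : α (khat + 1) ≤ α k := hmono (by omega) (by omega)
      have h4 : α (khat + 1) = b0 + a0 := hb0a
      linarith
  -- deeper levels sit inside (b0, b0+a0)
  have hJmid : ∀ m k, V k → J (m+1) k ⊆ Set.Ioo b0 (b0 + a0) := by
    intro m k hVk x hx
    rw [hJmem] at hx
    obtain ⟨h0, h1, h2, h3⟩ := hα01 k hVk
    obtain ⟨hl, hr⟩ := hx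
    have hL := (hAmid (m+1) (by omega) (α k) h0 h1).1
    have hR := (hAmid (m+1) (by omega) (α (k+1)) h2 h3).2
    exact ⟨lt_of_le_of_lt hL hl, lt_of_lt_of_le hr hR⟩
  -- membership transfer between levels
  have hJstep : ∀ m k x, x ∈ J (m+1) k → (x - b0) / a0 ∈ J m k := by
    intro m k x hx
    rw [hJmem] at hx ⊢
    obtain ⟨hl, hr⟩ := hx
    rw [hAstep m (α k)] at hl
    rw [hAstep m (α (k+1))] at hr
    constructor
    · rw [lt_div_iff₀ ha0]; linarith
    · rw [div_lt_iff₀ ha0]; linarith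
  -- disjointness of the intervals
  have huniq : ∀ m k m' k' x, V k → V k' → x ∈ J m k → x ∈ J m' k' → m = m' ∧ k = k' := by
    have hlevel : ∀ m k k' x, V k → V k' → x ∈ J m k → x ∈ J m k' → k = k' := by
      intro m k k' x hVk hVk' hx hx'
      rw [hJmem] at hx hx'
      by_contra hne
      obtain ⟨hk1', hkn'⟩ := hVrange k hVk
      obtain ⟨hk1'', hkn''⟩ := hVrange k' hVk'
      rcases lt_or_gt_of_ne hne with h | h
      · have hle : α (k+1) ≤ α k' := hmono (by omega) (by omega)
        have := hAmono m hle
        linarith [hx.2, hx'.1]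
      · have hle : α (k'+1) ≤ α k := hmono (by omega) (by omega)
        have := hAmono m hle
        linarith [hx'.2, hx.1]
    have hdeep : ∀ m t k k' x, V k → V k' → x ∈ J m k → x ∈ J (m + (t+1)) k' → False := by
      intro m t k k' x hVk hVk' hx hx'
      rw [hJmem] at hx hx'
      obtain ⟨h0, h1, h2, h3⟩ := hα01 k' hVk'
      have he1 : A m (A (t+1) (α k')) < x := by
        rw [hAcomp]; exact hx'.1
      have he2 : x < A m (A (t+1) (α (k'+1))) := by
        rw [hAcomp]; exact hx'.2
      have hm1 : b0 ≤ A (t+1) (α k') := (hAmid (t+1) (by omega) (α k') h0 h1).1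
      have hm2 : A (t+1) (α (k'+1)) ≤ b0 + a0 := (hAmid (t+1) (by omega) (α (k'+1)) h2 h3).2
      have hc1 : A m b0 ≤ A m (A (t+1) (α k')) := hAmono m hm1
      have hc2 : A m (A (t+1) (α (k'+1))) ≤ A m (b0 + a0) := hAmono m hm2
      obtain ⟨hk1', hkn'⟩ := hVrange k hVk
      rcases lt_or_gt_of_ne (hVne k hVk) with h | h
      · have hle : α (k+1) ≤ α khat := hmono (by omega) (by omega)
        rw [← hb0def] at hle
        have := hAmono m hle
        linarith [hx.2]
      · have hle : α (khat+1) ≤ α k := hmono (by omega) (by omega)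
        rw [hb0a] at hle
        have := hAmono m hle
        linarith [hx.1]
    intro m k m' k' x hVk hVk' hx hx'
    rcases lt_trichotomy m m' with h | h | h
    · obtain ⟨t, rfl⟩ : ∃ t, m' = m + (t+1) := ⟨m' - m - 1, by omega⟩
      exact absurd (hdeep m t k k' x hVk hVk' hx hx') (by simp)
    · subst h
      exact ⟨rfl, hlevel m k k' x hVk hVk' hx hx'⟩
    · obtain ⟨t, rfl⟩ : ∃ t, m = m' + (t+1) := ⟨m - m' - 1, by omega⟩
      exact absurd (hdeep m' t k' k x hVk' hVk hx' hx) (by simp)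
  -- the inverse maps
  obtain ⟨B, hBdef⟩ : ∃ B : ℕ → ℝ → ℝ, B = fun m x => xhat + (x - xhat) / a0 ^ m :=
    ⟨_, rfl⟩
  have hB0 : ∀ x, B 0 x = x := by intro x; simp [hBdef]
  have hAB : ∀ m x, A m (B m x) = x := by
    intro m x
    have := (hApow m).ne'
    simp only [hAdef, hBdef]
    field_simp
    ring
  have hBstep : ∀ m x, B (m+1) x = (B m x - b0) / a0 := by
    intro m x
    have h1 : b0 = xhat - a0 * xhat := by linarith [hxfix]
    have h2 := (hApow m).ne'
    simp only [hBdef, h1, pow_succ]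
    field_simp
    ring
  -- escape: some iterate of B leaves [0,1]
  have hexm : ∀ x : ℝ, x ≠ xhat → ∃ m, B (m+1) x ∉ Set.Icc (0:ℝ) 1 := by
    intro x hne
    have hd : 0 < |x - xhat| := abs_pos.mpr (sub_ne_zero.mpr hne)
    obtain ⟨m, hm⟩ := exists_pow_lt_of_lt_one hd ha01
    refine ⟨m, fun hmem => ?_⟩
    have h1 : |B (m+1) x - xhat| ≤ 1 := by
      obtain ⟨hb1, hb2⟩ := hmem
      rw [abs_le]
      constructor <;> linarith
    have h2 : |B (m+1) x - xhat| = |x - xhat| / a0 ^ (m+1) := by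
      simp only [hBdef, add_sub_cancel_left]
      rw [abs_div, abs_of_pos (hApow (m+1))]
    have h4 : a0 ^ (m+1) ≤ a0 ^ m := pow_le_pow_of_le_one ha0.le ha01.le (by omega)
    have h3 : 1 < |x - xhat| / a0 ^ (m+1) := by
      rw [lt_div_iff₀ (hApow (m+1))]
      linarith
    rw [h2] at h1
    linarith
  -- discrete location lemmas
  have hfindIcc : ∀ j, 1 ≤ j → ∀ z : ℝ, 0 ≤ z → z ≤ α (j+1) →
      ∃ k, 1 ≤ k ∧ k ≤ j ∧ α k ≤ z ∧ z ≤ α (k+1) := by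
    intro j hj
    induction j, hj using Nat.le_induction with
    | base =>
      intro z hz0 hz1
      exact ⟨1, le_rfl, le_rfl, by rw [hα1]; exact hz0, hz1⟩
    | succ j hj ih =>
      intro z hz0 hz1
      by_cases hzle : z ≤ α (j+1)
      · obtain ⟨k, h1, h2, h3, h4⟩ := ih z hz0 hzle
        exact ⟨k, h1, by omega, h3, h4⟩
      · exact ⟨j+1, by omega, le_rfl, (not_le.mp hzle).le, hz1⟩
  have hfindIoc : ∀ j, 1 ≤ j → ∀ z : ℝ, 0 < z → z ≤ α (j+1) →
      ∃ k, 1 ≤ k ∧ k ≤ j ∧ α k < z ∧ z ≤ α (k+1) := by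
    intro j hj
    induction j, hj using Nat.le_induction with
    | base =>
      intro z hz0 hz1
      exact ⟨1, le_rfl, le_rfl, by rw [hα1]; exact hz0, hz1⟩
    | succ j hj ih =>
      intro z hz0 hz1
      by_cases hzle : z ≤ α (j+1)
      · obtain ⟨k, h1, h2, h3, h4⟩ := ih z hz0 hzle
        exact ⟨k, h1, by omega, h3, h4⟩
      · exact ⟨j+1, by omega, le_rfl, not_le.mp hzle, hz1⟩
  have hfindIco : ∀ j, 1 ≤ j → ∀ z : ℝ, 0 ≤ z → z < α (j+1) →
      ∃ k, 1 ≤ k ∧ k ≤ j ∧ α k ≤ z ∧ z < α (k+1) := by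
    intro j hj
    induction j, hj using Nat.le_induction with
    | base =>
      intro z hz0 hz1
      exact ⟨1, le_rfl, le_rfl, by rw [hα1]; exact hz0, hz1⟩
    | succ j hj ih =>
      intro z hz0 hz1
      by_cases hzlt : z < α (j+1)
      · obtain ⟨k, h1, h2, h3, h4⟩ := ih z hz0 hzlt
        exact ⟨k, h1, by omega, h3, h4⟩
      · exact ⟨j+1, by omega, le_rfl, not_lt.mp hzlt, hz1⟩
  -- covering lemmas
  have hcoverIcc : ∀ x ∈ Set.Icc (0:ℝ) 1, x ≠ xhat →
      ∃ m k, V k ∧ A m (α k) ≤ x ∧ x ≤ A m (α (k+1)) := by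
    intro x hxIcc hne
    obtain ⟨m1, hm1⟩ := hexm x hne
    have hex : ∃ m, B (m+1) x ∉ Set.Icc (0:ℝ) 1 := ⟨m1, hm1⟩
    set m0 := Nat.find hex with hm0
    have hP : B (m0+1) x ∉ Set.Icc (0:ℝ) 1 := Nat.find_spec hex
    have hzmem : B m0 x ∈ Set.Icc (0:ℝ) 1 := by
      rcases Nat.eq_zero_or_pos m0 with h0 | hpos
      · rw [h0, hB0]; exact hxIcc
      · obtain ⟨t, ht⟩ : ∃ t, m0 = t + 1 := ⟨m0 - 1, by omega⟩
        have hmin := Nat.find_min hex (show t < m0 by omega)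
        rw [ht]
        exact not_not.mp hmin
    have hznot : B m0 x ∉ Set.Icc b0 (b0 + a0) := by
      intro hzin
      apply hP
      rw [hBstep m0 x]
      constructor
      · exact div_nonneg (by linarith [hzin.1]) ha0.le
      · rw [div_le_one ha0]; linarith [hzin.2]
    obtain ⟨k, hk1', hkn', hkl, hkr⟩ := hfindIcc n (by omega) (B m0 x) hzmem.1
      (by rw [hαtop]; exact hzmem.2)
    have hkne : k ≠ khat := by
      rintro rfl
      exact hznot ⟨by rw [hb0def]; exact hkl, by rw [← hb0a]; exact hkr⟩
    refine ⟨m0, k, (hVmem k).mpr ⟨Finset.mem_Icc.mpr ⟨hk1', hkn'⟩, hkne⟩, ?_, ?_⟩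
    · calc A m0 (α k) ≤ A m0 (B m0 x) := hAmono m0 hkl
        _ = x := hAB m0 x
    · calc x = A m0 (B m0 x) := (hAB m0 x).symm
        _ ≤ A m0 (α (k+1)) := hAmono m0 hkr
  have hcoverL : ∀ x : ℝ, 0 < x → x ≤ 1 → x ≠ xhat →
      ∃ m k, V k ∧ A m (α k) < x ∧ x ≤ A m (α (k+1)) := by
    intro x hx0' hx1' hne
    obtain ⟨m1, hm1⟩ := hexm x hne
    have hex : ∃ m, B (m+1) x ∉ Set.Ioc (0:ℝ) 1 :=
      ⟨m1, fun hmem => hm1 (Set.Ioc_subset_Icc_self hmem)⟩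
    set m0 := Nat.find hex with hm0
    have hP : B (m0+1) x ∉ Set.Ioc (0:ℝ) 1 := Nat.find_spec hex
    have hzmem : B m0 x ∈ Set.Ioc (0:ℝ) 1 := by
      rcases Nat.eq_zero_or_pos m0 with h0 | hpos
      · rw [h0, hB0]; exact ⟨hx0', hx1'⟩
      · obtain ⟨t, ht⟩ : ∃ t, m0 = t + 1 := ⟨m0 - 1, by omega⟩
        have hmin := Nat.find_min hex (show t < m0 by omega)
        rw [ht]
        exact not_not.mp hmin
    have hznot : B m0 x ∉ Set.Ioc b0 (b0 + a0) := by
      intro hzin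
      apply hP
      rw [hBstep m0 x]
      constructor
      · exact div_pos (by linarith [hzin.1]) ha0
      · rw [div_le_one ha0]; linarith [hzin.2]
    obtain ⟨k, hk1', hkn', hkl, hkr⟩ := hfindIoc n (by omega) (B m0 x) hzmem.1
      (by rw [hαtop]; exact hzmem.2)
    have hkne : k ≠ khat := by
      rintro rfl
      exact hznot ⟨by rw [hb0def]; exact hkl, by rw [← hb0a]; exact hkr⟩
    refine ⟨m0, k, (hVmem k).mpr ⟨Finset.mem_Icc.mpr ⟨hk1', hkn'⟩, hkne⟩, ?_, ?_⟩
    · calc A m0 (α k) < A m0 (B m0 x) := (hASM m0) hkl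
        _ = x := hAB m0 x
    · calc x = A m0 (B m0 x) := (hAB m0 x).symm
        _ ≤ A m0 (α (k+1)) := hAmono m0 hkr
  have hcoverR : ∀ x : ℝ, 0 ≤ x → x < 1 → x ≠ xhat →
      ∃ m k, V k ∧ A m (α k) ≤ x ∧ x < A m (α (k+1)) := by
    intro x hx0' hx1' hne
    obtain ⟨m1, hm1⟩ := hexm x hne
    have hex : ∃ m, B (m+1) x ∉ Set.Ico (0:ℝ) 1 :=
      ⟨m1, fun hmem => hm1 (Set.Ico_subset_Icc_self hmem)⟩
    set m0 := Nat.find hex with hm0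
    have hP : B (m0+1) x ∉ Set.Ico (0:ℝ) 1 := Nat.find_spec hex
    have hzmem : B m0 x ∈ Set.Ico (0:ℝ) 1 := by
      rcases Nat.eq_zero_or_pos m0 with h0 | hpos
      · rw [h0, hB0]; exact ⟨hx0', hx1'⟩
      · obtain ⟨t, ht⟩ : ∃ t, m0 = t + 1 := ⟨m0 - 1, by omega⟩
        have hmin := Nat.find_min hex (show t < m0 by omega)
        rw [ht]
        exact not_not.mp hmin
    have hznot : B m0 x ∉ Set.Ico b0 (b0 + a0) := by
      intro hzin
      apply hP
      rw [hBstep m0 x]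
      constructor
      · exact div_nonneg (by linarith [hzin.1]) ha0.le
      · rw [div_lt_one ha0]; linarith [hzin.2]
    obtain ⟨k, hk1', hkn', hkl, hkr⟩ := hfindIco n (by omega) (B m0 x) hzmem.1
      (by rw [hαtop]; exact hzmem.2)
    have hkne : k ≠ khat := by
      rintro rfl
      exact hznot ⟨by rw [hb0def]; exact hkl, by rw [← hb0a]; exact hkr⟩
    refine ⟨m0, k, (hVmem k).mpr ⟨Finset.mem_Icc.mpr ⟨hk1', hkn'⟩, hkne⟩, ?_, ?_⟩
    · calc A m0 (α k) ≤ A m0 (B m0 x) := hAmono m0 hkl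
        _ = x := hAB m0 x
    · calc x = A m0 (B m0 x) := (hAB m0 x).symm
        _ < A m0 (α (k+1)) := (hASM m0) hkr
  -- evaluation of the similarity operator on an interval
  have hsimEval : ∀ k, k ∈ Finset.Icc 1 n → ∀ x : ℝ, α k < x → x < α (k+1) →
      simOp n a d β f x = β k + d k * f ((x - α k) / a k) := by
    intro k hkmem x hxl hxr
    obtain ⟨hk1', hkn'⟩ := Finset.mem_Icc.mp hkmem
    simp only [simOp, ← hαdef]
    rw [Finset.sum_eq_single k]
    · exact Set.indicator_of_mem (Set.mem_Ioo.mpr ⟨hxl, hxr⟩) _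
    · intro j hj hjk
      obtain ⟨hj1, hjn⟩ := Finset.mem_Icc.mp hj
      apply Set.indicator_of_notMem
      intro hxj
      rcases lt_or_gt_of_ne hjk with h | h
      · have hle : α (j+1) ≤ α k := hmono (by omega) (by omega)
        exact absurd (lt_of_lt_of_le hxj.2 hle) (by linarith)
      · have hle : α (k+1) ≤ α j := hmono (by omega) (by omega)
        exact absurd (lt_of_le_of_lt hle hxj.1) (by linarith)
    · intro hnotmem
      exact absurd hkmem hnotmem
  -- values
  obtain ⟨cM, hcMdef⟩ : ∃ cM : ℕ → ℕ → ℝ, cM = fun m k => cseq (β khat) (d khat) (β k) m :=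
    ⟨_, rfl⟩
  have hcM0 : ∀ k, cM 0 k = β k := by intro k; simp only [hcMdef, cseq]
  have hcMsucc : ∀ m k, cM (m+1) k = β khat + d khat * cM m k := by
    intro m k; simp only [hcMdef, cseq]
  -- the key induction
  have Hae : ∀ m, ∀ᵐ x ∂(volume : Measure ℝ), ∀ k, V k → x ∈ J m k → f x = cM m k := by
    intro m
    induction m with
    | zero =>
      filter_upwards [Hglob] with x hg k hVk hxJ
      have hxJ' := hxJ
      rw [hJmem, hA0, hA0] at hxJ'
      have hxIcc : x ∈ Set.Icc (0:ℝ) 1 := hJIcc 0 k hVk hxJ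
      rw [hg hxIcc, hsimEval k ((hVmem k).mp hVk).1 x hxJ'.1 hxJ'.2,
        hd0 k ((hVmem k).mp hVk).1 (hVne k hVk), hcM0]
      ring
    | succ m ih =>
      have hqmp := (qmp_affine a0⁻¹ (-(b0 / a0)) (inv_ne_zero ha0.ne')).ae ih
      filter_upwards [Hglob, hqmp] with x hg hih k hVk hxJ
      have hmid : x ∈ Set.Ioo b0 (b0 + a0) := hJmid m k hVk hxJ
      have hxIcc : x ∈ Set.Icc (0:ℝ) 1 := hJIcc (m+1) k hVk hxJ
      have hxk : α khat < x ∧ x < α (khat+1) := by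
        rw [hb0a, ← hb0def] at *
        exact ⟨hmid.1, hmid.2⟩
      have heval := hsimEval khat hk x hxk.1 hxk.2
      have hrw : (x - α khat) / a khat = a0⁻¹ * x + -(b0 / a0) := by
        rw [← hb0def, ← ha0def]
        field_simp
        ring
      have hstep : a0⁻¹ * x + -(b0 / a0) ∈ J m k := by
        have h1 : a0⁻¹ * x + -(b0 / a0) = (x - b0) / a0 := by field_simp; ring
        rw [h1]
        exact hJstep m k x hxJ
      rw [hg hxIcc, heval, hrw, hih k hVk hstep, hcMsucc]
  have HaeAll : ∀ᵐ x ∂(volume : Measure ℝ), ∀ m k, V k → x ∈ J m k → f x = cM m k :=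
    ae_all_iff.mpr Hae
  -- the piecewise constant function
  refine ⟨pcFun cM J V, ?_, ?_, ?_, ?_, ?_⟩
  · -- f =ᵐ g
    rw [EventuallyEq, ae_iff, Measure.restrict_apply' measurableSet_Icc]
    have hP0 : volume {x : ℝ | ¬ ∀ m k, V k → x ∈ J m k → f x = cM m k} = 0 :=
      ae_iff.mp HaeAll
    have hC0 : volume ({xhat} ∪ Set.range (fun q : ℕ × ℕ => A q.1 (α q.2))) = 0 :=
      ((Set.countable_singleton xhat).union (Set.countable_range _)).measure_zero _
    apply measure_mono_null _ (measure_union_null hP0 hC0)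
    rintro x ⟨hxne, hxIcc⟩
    simp only [Set.mem_setOf_eq] at hxne
    by_cases hxh : x = xhat
    · exact Or.inr (Or.inl hxh)
    by_cases hxJ : ∃ m k, V k ∧ x ∈ J m k
    · obtain ⟨m, k, hVk, hmem⟩ := hxJ
      left
      intro hPx
      exact hxne (by rw [pcFun_eq huniq hVk hmem]; exact hPx m k hVk hmem)
    · obtain ⟨m, k, hVk, hl, hr⟩ := hcoverIcc x hxIcc hxh
      rcases hl.eq_or_lt with he | hl'
      · exact Or.inr (Or.inr ⟨(m, k), he⟩)
      rcases hr.eq_or_lt with he | hr'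
      · exact Or.inr (Or.inr ⟨(m, k+1), he.symm⟩)
      · exact absurd ⟨m, k, hVk, (hJmem m k x).mpr ⟨hl', hr'⟩⟩ hxJ
  · -- countable image
    apply Set.Countable.mono _ ((Set.countable_range (fun q : ℕ × ℕ => cM q.1 q.2)).insert 0)
    rintro y ⟨x, _, rfl⟩
    exact pcFun_mem x
  · -- the family of intervals
    refine ⟨{S | ∃ q : ℕ × ℕ, V q.2 ∧ S = J q.1 q.2} ∪
      (fun z => ({z} : Set ℝ)) ''
        {x | (x ∈ Set.Icc (0:ℝ) 1 \ {xhat}) ∧ ∀ m k, V k → x ∉ J m k}, ?_, ?_, ?_, ?_⟩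
    · apply Set.Countable.union
      · apply Set.Countable.mono _ (Set.countable_range (fun q : ℕ × ℕ => J q.1 q.2))
        rintro S ⟨q, _, rfl⟩
        exact ⟨q, rfl⟩
      · apply Set.Countable.image
        apply Set.Countable.mono _
          (((Set.countable_singleton xhat).union
            (Set.countable_range (fun q : ℕ × ℕ => A q.1 (α q.2)))).mono (Set.Subset.refl _))
        rintro x ⟨⟨hxIcc, hxh⟩, hnotJ⟩
        simp only [Set.mem_singleton_iff] at hxh
        obtain ⟨m, k, hVk, hl, hr⟩ := hcoverIcc x hxIcc hxh
        rcases hl.eq_or_lt with he | hl'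
        · exact Or.inr ⟨(m, k), he⟩
        rcases hr.eq_or_lt with he | hr'
        · exact Or.inr ⟨(m, k+1), he.symm⟩
        · exact absurd ((hJmem m k x).mpr ⟨hl', hr'⟩) (hnotJ m k hVk)
    · rintro I (⟨q, hVq, rfl⟩ | ⟨z, hz, rfl⟩)
      · rw [hJdef]
        exact Set.ordConnected_Ioo
      · exact Set.ordConnected_singleton
    · ext x
      simp only [Set.mem_sUnion]
      constructor
      · rintro ⟨S, (⟨q, hVq, rfl⟩ | ⟨z, hz, rfl⟩), hxS⟩
        · refine ⟨hJIcc q.1 q.2 hVq hxS, fun hxh => ?_⟩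
          rw [Set.mem_singleton_iff] at hxh
          subst hxh
          exact hxnotJ q.1 q.2 hVq hxS
        · rw [Set.mem_singleton_iff.mp hxS]
          exact hz.1
      · intro hx
        by_cases hxJ : ∃ m k, V k ∧ x ∈ J m k
        · obtain ⟨m, k, hVk, hmem⟩ := hxJ
          exact ⟨J m k, Or.inl ⟨(m, k), hVk, rfl⟩, hmem⟩
        · refine ⟨{x}, Or.inr ⟨x, ⟨hx, fun m k hVk hmem => hxJ ⟨m, k, hVk, hmem⟩⟩, rfl⟩, rfl⟩
    · rintro I (⟨q, hVq, rfl⟩ | ⟨z, hz, rfl⟩) x hx y hy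
      · rw [pcFun_eq huniq hVq hx, pcFun_eq huniq hVq hy]
      · rw [Set.mem_singleton_iff.mp hx, Set.mem_singleton_iff.mp hy]
  · -- one-sided limits
    intro x hxIcc hxh
    constructor
    · -- left limit
      rcases eq_or_lt_of_le hxIcc.1 with h0 | h0
      · refine ⟨0, ?_⟩
        have hempty : Set.Icc (0:ℝ) 1 ∩ Set.Iio x = ∅ := by
          ext y
          simp only [Set.mem_inter_iff, Set.mem_Icc, Set.mem_Iio, Set.mem_empty_iff_false,
            iff_false, not_and, and_imp]
          intro hy0 _ hyx
          rw [← h0] at hyx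
          linarith
        rw [hempty, nhdsWithin_empty]
        exact tendsto_bot
      · obtain ⟨m, k, hVk, hl, hr⟩ := hcoverL x h0 hxIcc.2 hxh
        refine ⟨cM m k, ?_⟩
        have hmem : Set.Ioo (A m (α k)) x ∈ nhdsWithin x (Set.Icc (0:ℝ) 1 ∩ Set.Iio x) := by
          apply nhdsWithin_mono x (Set.inter_subset_right)
          exact Ioo_mem_nhdsLT_of_mem ⟨hl, le_rfl⟩
        apply Filter.Tendsto.congr' _ (tendsto_const_nhds (α := ℝ))
        apply Filter.eventuallyEq_of_mem hmem
        intro y hy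
        have hyJ : y ∈ J m k := (hJmem m k y).mpr ⟨hy.1, lt_of_lt_of_le hy.2 hr⟩
        exact (pcFun_eq huniq hVk hyJ).symm
    · -- right limit
      rcases eq_or_lt_of_le hxIcc.2 with h1 | h1
      · refine ⟨0, ?_⟩
        have hempty : Set.Icc (0:ℝ) 1 ∩ Set.Ioi x = ∅ := by
          ext y
          simp only [Set.mem_inter_iff, Set.mem_Icc, Set.mem_Ioi, Set.mem_empty_iff_false,
            iff_false, not_and, and_imp]
          intro _ hy1 hyx
          rw [h1] at hyx
          linarith
        rw [hempty, nhdsWithin_empty]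
        exact tendsto_bot
      · obtain ⟨m, k, hVk, hl, hr⟩ := hcoverR x hxIcc.1 h1 hxh
        refine ⟨cM m k, ?_⟩
        have hmem : Set.Ioo x (A m (α (k+1))) ∈ nhdsWithin x (Set.Icc (0:ℝ) 1 ∩ Set.Ioi x) := by
          apply nhdsWithin_mono x (Set.inter_subset_right)
          exact Ioo_mem_nhdsGT_of_mem ⟨le_rfl, hr⟩
        apply Filter.Tendsto.congr' _ (tendsto_const_nhds (α := ℝ))
        apply Filter.eventuallyEq_of_mem hmem
        intro y hy
        have hyJ : y ∈ J m k := (hJmem m k y).mpr ⟨lt_of_le_of_lt hl hy.1, hy.2⟩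
        exact (pcFun_eq huniq hVk hyJ).symm
  · -- countable discontinuity set
    apply Set.Countable.mono _
      ((Set.countable_singleton xhat).union
        (Set.countable_range (fun q : ℕ × ℕ => A q.1 (α q.2))))
    rintro x ⟨hxIcc, hxdisc⟩
    by_cases hxh : x = xhat
    · exact Or.inl hxh
    by_cases hxJ : ∃ m k, V k ∧ x ∈ J m k
    · exfalso
      obtain ⟨m, k, hVk, hmem⟩ := hxJ
      apply hxdisc
      have hopen : IsOpen (J m k) := by rw [hJdef]; exact isOpen_Ioo
      have hnb : J m k ∈ nhds x := hopen.mem_nhds hmem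
      have hconst : (fun _ : ℝ => cM m k) =ᶠ[nhds x] pcFun cM J V := by
        apply Filter.eventuallyEq_of_mem hnb
        intro y hy
        exact (pcFun_eq huniq hVk hy).symm
      exact (continuousAt_const.congr hconst).continuousWithinAt
    · obtain ⟨m, k, hVk, hl, hr⟩ := hcoverIcc x hxIcc hxh
      rcases hl.eq_or_lt with he | hl'
      · exact Or.inr ⟨(m, k), he⟩
      rcases hr.eq_or_lt with he | hr'
      · exact Or.inr ⟨(m, k+1), he.symm⟩
      · exact absurd ⟨m, k, hVk, (hJmem m k x).mpr ⟨hl', hr'⟩⟩ hxJ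
end

section
/- Let f ∈ L_p[0,1] (1 ≤ p < ∞) be self-similar of zero spectral order, let S(x) = a_{k̂}x + α_{k̂}, and let G^m(0) denote the m-th iterate of G applied to the zero function. Then for every m ≥ 1, f coincides almost everywhere with G^m(0) on the complement [0,1]∖S^m([0,1]) of the nested interval S^m([0,1]) (which has length a_{k̂}^m). -/
open MeasureTheory Set Filter
open scoped ENNReal NNReal

lemma affine_image_Icc (c b u v : ℝ) (hc : 0 < c) :
    (fun x => c * x + b) '' Set.Icc u v = Set.Icc (c*u+b) (c*v+b) := by
  ext y
  simp only [Set.mem_image, Set.mem_Icc]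
  constructor
  · rintro ⟨x, ⟨h1, h2⟩, rfl⟩
    constructor <;> nlinarith
  · rintro ⟨h1, h2⟩
    refine ⟨(y - b)/c, ⟨?_, ?_⟩, by field_simp; ring⟩
    · rw [le_div_iff₀ hc]; linarith
    · rw [div_le_iff₀ hc]; linarith

lemma affine_image_volume (c b : ℝ) (hc : c ≠ 0) (A : Set ℝ) :
    volume ((fun x => c * x + b) '' A) = ENNReal.ofReal |c| * volume A := by
  have himg : (fun x => c * x + b) '' A = (fun y => -b + y) ⁻¹' ((c⁻¹ * ·) ⁻¹' A) := by
    ext y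
    simp only [Set.mem_image, Set.mem_preimage]
    constructor
    · rintro ⟨x, hx, rfl⟩
      have : c⁻¹ * (-b + (c * x + b)) = x := by field_simp; ring
      rwa [this]
    · intro h
      exact ⟨c⁻¹ * (-b + y), h, by field_simp; ring⟩
  rw [himg, measure_preimage_add, Real.volume_preimage_mul_left (inv_ne_zero hc), inv_inv]

/-- for every `m ≥ 1`, a self-similar function of zero spectral order
coincides a.e. with the `m`-th iterate `G^m(0)` outside the nested interval
`S^m([0,1])` (which has length `a_{k̂}^m`), where `S(x) = a_{k̂} x + α_{k̂}`. -/
theorem selfSimilar_zeroOrder_eq_iterate_off_nested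
    (n : ℕ) (hn : 1 < n) (a d β : ℕ → ℝ)
    (ha : ∀ k ∈ Finset.Icc 1 n, 0 < a k)
    (hsum : ∑ k ∈ Finset.Icc 1 n, a k = 1)
    (p : ℝ≥0∞) (hp1 : 1 ≤ p) (hpt : p ≠ ⊤)
    (khat : ℕ) (hk : khat ∈ Finset.Icc 1 n)
    (hdk : d khat ≠ 0)
    (hd0 : ∀ k ∈ Finset.Icc 1 n, k ≠ khat → d k = 0)
    (hβ : ∃ k ∈ Finset.Icc 1 n, β k ≠ 0)
    (hcontr : a khat * |d khat| ^ p.toReal < 1)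
    (f : ℝ → ℝ) (hf : MemLp f p (volume.restrict (Set.Icc (0:ℝ) 1)))
    (hfix : f =ᵐ[volume.restrict (Set.Icc (0:ℝ) 1)] simOp n a d β f)
    (S : ℝ → ℝ) (hS : S = fun x => a khat * x + alphaOf a khat) :
    ∀ m : ℕ, 1 ≤ m →
      volume ((S^[m]) '' Set.Icc (0:ℝ) 1) = ENNReal.ofReal (a khat ^ m) ∧
      f =ᵐ[volume.restrict (Set.Icc (0:ℝ) 1 \ (S^[m]) '' Set.Icc (0:ℝ) 1)]
        (simOp n a d β)^[m] (fun _ => (0:ℝ)) := by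
  obtain ⟨hk1, hkn⟩ := Finset.mem_Icc.mp hk
  have haK : 0 < a khat := ha khat hk
  set α : ℝ := alphaOf a khat with hα
  -- basic alpha facts
  have alpha_mono : ∀ i j : ℕ, i ≤ j → j ≤ n + 1 → alphaOf a i ≤ alphaOf a j := by
    intro i j hij hj
    apply Finset.sum_le_sum_of_subset_of_nonneg (Finset.Ico_subset_Ico le_rfl hij)
    intro t ht _
    have h1 := Finset.mem_Ico.mp ht
    exact (ha t (Finset.mem_Icc.mpr ⟨h1.1, by omega⟩)).le
  have alpha_succ : ∀ k : ℕ, 1 ≤ k → alphaOf a (k + 1) = alphaOf a k + a k := by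
    intro k hk1'
    unfold alphaOf
    rw [Finset.sum_Ico_succ_top hk1']
  have alpha_top : alphaOf a (n + 1) = 1 := by
    unfold alphaOf
    rw [Finset.Ico_add_one_right_eq_Icc]; exact hsum
  have hα0 : 0 ≤ α := by
    have : alphaOf a 1 = 0 := by simp [alphaOf]
    have h := alpha_mono 1 khat hk1 (by omega)
    rw [this] at h; exact h
  have hαa1 : α + a khat ≤ 1 := by
    have h := alpha_mono (khat + 1) (n + 1) (by omega) le_rfl
    rw [alpha_succ khat hk1, alpha_top] at h
    exact h
  -- image of iterates
  have himg : ∀ m : ℕ, (S^[m]) '' Set.Icc (0:ℝ) 1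
      = Set.Icc ((S^[m]) 0) ((S^[m]) 0 + a khat ^ m) := by
    intro m
    induction m with
    | zero => simp
    | succ m ih =>
      rw [Function.iterate_succ' S m]
      show (S ∘ S^[m]) '' _ = _
      rw [Set.image_comp, ih]
      simp only [Function.comp_apply]
      generalize (S^[m]) 0 = u
      rw [hS, affine_image_Icc _ _ _ _ haK]
      beta_reduce
      have e : a khat * (u + a khat ^ m) + α = a khat * u + α + a khat ^ (m + 1) := by ring
      rw [e]
  have hvol : ∀ m : ℕ, volume ((S^[m]) '' Set.Icc (0:ℝ) 1) = ENNReal.ofReal (a khat ^ m) := by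
    intro m
    rw [himg m, Real.volume_Icc]
    congr 1
    ring
  -- S '' Icc 0 1 = Icc α (α + a khat)
  have hS0 : S 0 = α := by rw [hS]; simp
  have himg1 : S '' Set.Icc (0:ℝ) 1 = Set.Icc α (α + a khat) := by
    have := himg 1
    simp only [Function.iterate_one, pow_one] at this
    rw [this, hS0]
  -- nested subsets
  have hI1sub : S '' Set.Icc (0:ℝ) 1 ⊆ Set.Icc (0:ℝ) 1 := by
    rw [himg1]
    exact Set.Icc_subset_Icc hα0 hαa1
  have hIsub : ∀ m : ℕ, (S^[m]) '' Set.Icc (0:ℝ) 1 ⊆ Set.Icc (0:ℝ) 1 := by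
    intro m
    induction m with
    | zero => simp
    | succ m ih =>
      rw [Function.iterate_succ']
      show (S ∘ S^[m]) '' _ ⊆ _
      rw [Set.image_comp]
      exact (Set.image_mono ih).trans hI1sub
  -- pointwise lemmas about simOp
  have hB : ∀ (g h : ℝ → ℝ) (x : ℝ), x ∉ Set.Ioo α (alphaOf a (khat + 1)) →
      simOp n a d β g x = simOp n a d β h x := by
    intro g h x hx
    unfold simOp
    refine Finset.sum_congr rfl fun k hkm => ?_
    by_cases hkk : k = khat
    · subst hkk
      rw [Set.indicator_of_notMem hx, Set.indicator_of_notMem hx]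
    · simp only [hd0 k hkm hkk, zero_mul, add_zero]
  have hC : ∀ (g : ℝ → ℝ) (x : ℝ), x ∈ Set.Ioo α (alphaOf a (khat + 1)) →
      simOp n a d β g x = β khat + d khat * g ((x - α) / a khat) := by
    intro g x hx
    unfold simOp
    rw [Finset.sum_eq_single_of_mem khat hk]
    · rw [Set.indicator_of_mem hx]
    · intro k hkm hkk
      apply Set.indicator_of_notMem
      intro hxk
      obtain ⟨hk1', hkn'⟩ := Finset.mem_Icc.mp hkm
      rcases lt_or_gt_of_ne hkk with hlt | hgt
      · have h1 : alphaOf a (k + 1) ≤ α := alpha_mono (k + 1) khat hlt (by omega)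
        have := hx.1; have := hxk.2; linarith
      · have h1 : alphaOf a (khat + 1) ≤ alphaOf a k := alpha_mono (khat + 1) k hgt (by omega)
        have := hx.2; have := hxk.1; linarith
  have hIoo : Set.Ioo α (alphaOf a (khat + 1)) = Set.Ioo α (α + a khat) := by
    rw [alpha_succ khat hk1]
  -- null image under S
  have hSnull : ∀ A : Set ℝ, volume A = 0 → volume (S '' A) = 0 := by
    intro A hA
    rw [hS, affine_image_volume _ _ haK.ne' A, hA, mul_zero]
  set G : (ℝ → ℝ) → (ℝ → ℝ) := simOp n a d β with hG
  -- base case a.e. statement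
  have hmeas1 : MeasurableSet (Set.Icc (0:ℝ) 1 \ S '' Set.Icc (0:ℝ) 1) := by
    rw [himg1]; exact measurableSet_Icc.diff measurableSet_Icc
  have base : f =ᵐ[volume.restrict (Set.Icc (0:ℝ) 1 \ S '' Set.Icc (0:ℝ) 1)] G (fun _ => 0) := by
    have h1 : f =ᵐ[volume.restrict (Set.Icc (0:ℝ) 1 \ S '' Set.Icc (0:ℝ) 1)] G f :=
      ae_restrict_of_ae_restrict_of_subset Set.diff_subset hfix
    refine h1.trans ?_
    refine (ae_restrict_mem hmeas1).mono fun x hx => ?_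
    apply hB
    rw [hIoo]
    intro hxIoo
    exact hx.2 (himg1 ▸ Set.Ioo_subset_Icc_self hxIoo)
  -- main induction
  have main : ∀ m : ℕ, 1 ≤ m →
      f =ᵐ[volume.restrict (Set.Icc (0:ℝ) 1 \ (S^[m]) '' Set.Icc (0:ℝ) 1)]
        (G^[m]) (fun _ => (0:ℝ)) := by
    intro m hm
    induction m, hm using Nat.le_induction with
    | base => simpa using base
    | succ m hm ih =>
      have hmeasm1 : MeasurableSet ((S^[m+1]) '' Set.Icc (0:ℝ) 1) := by
        rw [himg (m+1)]; exact measurableSet_Icc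
      have hsubm1 : (S^[m+1]) '' Set.Icc (0:ℝ) 1 ⊆ S '' Set.Icc (0:ℝ) 1 := by
        rw [Function.iterate_succ']
        show (S ∘ S^[m]) '' _ ⊆ _
        rw [Set.image_comp]
        exact Set.image_mono (hIsub m)
      have hdecomp : Set.Icc (0:ℝ) 1 \ (S^[m+1]) '' Set.Icc (0:ℝ) 1
          = (Set.Icc (0:ℝ) 1 \ S '' Set.Icc (0:ℝ) 1)
            ∪ (S '' Set.Icc (0:ℝ) 1 \ (S^[m+1]) '' Set.Icc (0:ℝ) 1) := by
        rw [Set.diff_union_diff_cancel hI1sub hsubm1]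
      rw [hdecomp]
      have him : (S^[m+1]) '' Set.Icc (0:ℝ) 1 = S '' ((S^[m]) '' Set.Icc (0:ℝ) 1) := by
        rw [Function.iterate_succ']
        exact Set.image_comp _ _ _
      -- part 1
      have part1 : f =ᵐ[volume.restrict (Set.Icc (0:ℝ) 1 \ S '' Set.Icc (0:ℝ) 1)]
          (G^[m+1]) (fun _ => (0:ℝ)) := by
        refine base.trans ?_
        refine (ae_restrict_mem hmeas1).mono fun x hx => ?_
        have hx' : x ∉ Set.Ioo α (alphaOf a (khat + 1)) := by
          rw [hIoo]
          intro hxIoo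
          exact hx.2 (himg1 ▸ Set.Ioo_subset_Icc_self hxIoo)
        rw [Function.iterate_succ_apply']
        exact hB _ _ x hx'
      -- part 2
      have hTmeas : MeasurableSet (S '' Set.Icc (0:ℝ) 1 \ (S^[m+1]) '' Set.Icc (0:ℝ) 1) := by
        rw [himg1]
        exact measurableSet_Icc.diff hmeasm1
      have hTfix : f =ᵐ[volume.restrict (S '' Set.Icc (0:ℝ) 1 \ (S^[m+1]) '' Set.Icc (0:ℝ) 1)]
          G f :=
        ae_restrict_of_ae_restrict_of_subset (Set.diff_subset.trans hI1sub) hfix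
      have hmeasD : MeasurableSet (Set.Icc (0:ℝ) 1 \ (S^[m]) '' Set.Icc (0:ℝ) 1) := by
        rw [himg m]
        exact measurableSet_Icc.diff measurableSet_Icc
      have hZ : volume ({y | ¬ f y = (G^[m]) (fun _ => (0:ℝ)) y}
          ∩ (Set.Icc (0:ℝ) 1 \ (S^[m]) '' Set.Icc (0:ℝ) 1)) = 0 := by
        have h := ih
        rw [Filter.EventuallyEq, ae_iff, Measure.restrict_apply' hmeasD] at h
        exact h
      have hN : volume (S '' ({y | ¬ f y = (G^[m]) (fun _ => (0:ℝ)) y}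
          ∩ (Set.Icc (0:ℝ) 1 \ (S^[m]) '' Set.Icc (0:ℝ) 1)) ∪ ({α, α + a khat} : Set ℝ)) = 0 :=
        measure_union_null (hSnull _ hZ)
          (((Set.finite_singleton (α + a khat)).insert α).measure_zero volume)
      have hNae : ∀ᵐ x ∂(volume.restrict (S '' Set.Icc (0:ℝ) 1 \ (S^[m+1]) '' Set.Icc (0:ℝ) 1)),
          x ∉ S '' ({y | ¬ f y = (G^[m]) (fun _ => (0:ℝ)) y}
          ∩ (Set.Icc (0:ℝ) 1 \ (S^[m]) '' Set.Icc (0:ℝ) 1)) ∪ ({α, α + a khat} : Set ℝ) :=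
        ae_mono Measure.restrict_le_self (measure_eq_zero_iff_ae_notMem.mp hN)
      have part2 : f =ᵐ[volume.restrict (S '' Set.Icc (0:ℝ) 1 \ (S^[m+1]) '' Set.Icc (0:ℝ) 1)]
          (G^[m+1]) (fun _ => (0:ℝ)) := by
        filter_upwards [hTfix, ae_restrict_mem hTmeas, hNae] with x hfx hxT hxN
        obtain ⟨hxS, hxnot⟩ := hxT
        have hxIcc : x ∈ Set.Icc α (α + a khat) := himg1 ▸ hxS
        have hxne1 : x ≠ α := fun h => hxN (Or.inr (by simp [h]))
        have hxne2 : x ≠ α + a khat := fun h => hxN (Or.inr (by simp [h]))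
        have hxIoo : x ∈ Set.Ioo α (α + a khat) :=
          ⟨hxIcc.1.lt_of_ne (fun h => hxne1 h.symm), hxIcc.2.lt_of_ne hxne2⟩
        have hxIoo' : x ∈ Set.Ioo α (alphaOf a (khat + 1)) := by rw [hIoo]; exact hxIoo
        obtain ⟨y0, hy0, hxy0⟩ := hxS
        have hyx : (x - α) / a khat = y0 := by
          rw [← hxy0, hS]
          field_simp
          ring
        have hy0notm : y0 ∉ (S^[m]) '' Set.Icc (0:ℝ) 1 := by
          intro hmem
          exact hxnot (him ▸ ⟨y0, hmem, hxy0⟩)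
        have hy0Z : f y0 = (G^[m]) (fun _ => (0:ℝ)) y0 := by
          by_contra hne
          exact hxN (Or.inl ⟨y0, ⟨hne, hy0, hy0notm⟩, hxy0⟩)
        calc f x = G f x := hfx
          _ = β khat + d khat * f ((x - α) / a khat) := hC f x hxIoo'
          _ = β khat + d khat * ((G^[m]) (fun _ => (0:ℝ))) ((x - α) / a khat) := by
              rw [hyx, hy0Z]
          _ = G ((G^[m]) (fun _ => (0:ℝ))) x := (hC _ x hxIoo').symm
          _ = (G^[m+1]) (fun _ => (0:ℝ)) x := congrFun (Function.iterate_succ_apply' G m _).symm x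
      exact (ae_restrict_union_iff _ _ _).mpr ⟨part1, part2⟩
  intro m hm
  exact ⟨hvol m, main m hm⟩
end

section
/- Let f ∈ L_p[0,1] (1 ≤ p < ∞) be self-similar of zero spectral order with d_{k̂} = 1. Then for every m ≥ 1 and every index i ≠ k̂, f equals the constant (m−1)·β_{k̂} + β_i almost everywhere on the interval I(m,i) = S^{m−1}([α_i, α_{i+1}]), where S(x) = a_{k̂}x + α_{k̂}. -/
open MeasureTheory Set Filter
open scoped ENNReal NNReal

lemma null_image_affine {c b : ℝ} (hc : c ≠ 0) {N : Set ℝ} (hN : volume N = 0) :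
    volume ((fun x => c * x + b) '' N) = 0 := by
  set M := toMeasurable volume N with hM
  have hsub : (fun x => c * x + b) '' N ⊆ (fun x => c⁻¹ * x + -(b/c)) ⁻¹' M := by
    rintro _ ⟨y, hy, rfl⟩
    have : c⁻¹ * (c * y + b) + -(b/c) = y := by field_simp; ring
    simpa [this] using subset_toMeasurable volume N hy
  refine measure_mono_null hsub ?_
  have : (fun x : ℝ => c⁻¹ * x + -(b/c)) ⁻¹' M = (c⁻¹ * ·) ⁻¹' ((· + -(b/c)) ⁻¹' M) := rfl
  rw [this, Real.volume_preimage_mul_left (inv_ne_zero hc),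
    measure_preimage_add_right volume _ M, measure_toMeasurable, hN, mul_zero]


/-- if `d_{k̂} = 1`, then on each interval `I(m,i) = S^{m−1}([α_i, α_{i+1}])`
(`i ≠ k̂`, `m ≥ 1`) the self-similar function of zero spectral order is a.e. equal to the
constant `(m−1)·β_{k̂} + β_i`. -/
theorem selfSimilar_zeroOrder_const_on_Imi_of_d_eq_one
    (n : ℕ) (hn : 1 < n) (a d β : ℕ → ℝ)
    (ha : ∀ k ∈ Finset.Icc 1 n, 0 < a k)
    (hsum : ∑ k ∈ Finset.Icc 1 n, a k = 1)
    (p : ℝ≥0∞) (hp1 : 1 ≤ p) (hpt : p ≠ ⊤)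
    (khat : ℕ) (hk : khat ∈ Finset.Icc 1 n)
    (hdk : d khat ≠ 0)
    (hd0 : ∀ k ∈ Finset.Icc 1 n, k ≠ khat → d k = 0)
    (hβ : ∃ k ∈ Finset.Icc 1 n, β k ≠ 0)
    (hcontr : a khat * |d khat| ^ p.toReal < 1)
    (f : ℝ → ℝ) (hf : MemLp f p (volume.restrict (Set.Icc (0:ℝ) 1)))
    (hfix : f =ᵐ[volume.restrict (Set.Icc (0:ℝ) 1)] simOp n a d β f)
    (hdone : d khat = 1)
    (S : ℝ → ℝ) (hS : S = fun x => a khat * x + alphaOf a khat) :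
    ∀ m : ℕ, 1 ≤ m → ∀ i ∈ Finset.Icc 1 n, i ≠ khat →
      f =ᵐ[volume.restrict ((S^[m - 1]) '' Set.Icc (alphaOf a i) (alphaOf a (i + 1)))]
        (fun _ => ((m : ℝ) - 1) * β khat + β i) := by
  
  subst hS
  obtain ⟨hk1, hkn⟩ := Finset.mem_Icc.mp hk
  have hmono : ∀ j k', 1 ≤ j → j ≤ k' → k' ≤ n + 1 → alphaOf a j ≤ alphaOf a k' := by
    intro j k' hj hjk hk'
    have hcons := Finset.sum_Ico_consecutive a hj hjk
    have hnn : 0 ≤ ∑ i ∈ Finset.Ico j k', a i :=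
      Finset.sum_nonneg fun i hi => by
        obtain ⟨h1, h2⟩ := Finset.mem_Ico.mp hi
        exact (ha i (Finset.mem_Icc.mpr ⟨le_trans hj h1, by omega⟩)).le
    unfold alphaOf
    rw [← hcons]
    linarith
  have hsucc : ∀ j, 1 ≤ j → alphaOf a (j + 1) = alphaOf a j + a j := by
    intro j hj
    unfold alphaOf
    rw [Finset.sum_Ico_succ_top hj]
  have h1z : alphaOf a 1 = 0 := by simp [alphaOf]
  have hend : alphaOf a (n + 1) = 1 := by
    unfold alphaOf
    rw [Finset.Ico_add_one_right_eq_Icc, hsum]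
  -- simOp evaluation on a cell
  have hsim : ∀ k ∈ Finset.Icc 1 n, ∀ x ∈ Ioo (alphaOf a k) (alphaOf a (k + 1)),
      simOp n a d β f x = β k + d k * f ((x - alphaOf a k) / a k) := by
    intro k hkk x hx
    obtain ⟨hk1', hkn'⟩ := Finset.mem_Icc.mp hkk
    unfold simOp
    rw [Finset.sum_eq_single k]
    · rw [indicator_of_mem hx]
    · intro j hj hjk
      obtain ⟨hj1, hjn⟩ := Finset.mem_Icc.mp hj
      apply indicator_of_notMem
      intro hxj
      rcases lt_or_gt_of_ne hjk with h | h
      · have : alphaOf a (j + 1) ≤ alphaOf a k := hmono (j + 1) k (by omega) (by omega) (by omega)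
        have := hx.1; have := hxj.2; linarith
      · have : alphaOf a (k + 1) ≤ alphaOf a j := hmono (k + 1) j (by omega) (by omega) (by omega)
        have := hx.2; have := hxj.1; linarith
    · intro hnot; exact absurd hkk hnot
  -- cells are inside [0,1]
  have hcellsub : ∀ k ∈ Finset.Icc 1 n,
      Icc (alphaOf a k) (alphaOf a (k + 1)) ⊆ Icc (0:ℝ) 1 := by
    intro k hkk x hx
    obtain ⟨hk1', hkn'⟩ := Finset.mem_Icc.mp hkk
    constructor
    · have h2 := hmono 1 k (le_refl 1) hk1' (by omega)
      rw [h1z] at h2; linarith [hx.1]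
    · have h2 := hmono (k + 1) (n + 1) (by omega) (by omega) (le_refl _)
      rw [hend] at h2; linarith [hx.2]
  -- a.e. identity on each cell
  have hcell : ∀ k ∈ Finset.Icc 1 n,
      ∀ᵐ x ∂(volume.restrict (Icc (alphaOf a k) (alphaOf a (k + 1)))),
        f x = β k + d k * f ((x - alphaOf a k) / a k) := by
    intro k hkk
    rw [← restrict_Ioo_eq_restrict_Icc]
    have hsub : Ioo (alphaOf a k) (alphaOf a (k + 1)) ⊆ Icc (0:ℝ) 1 :=
      Ioo_subset_Icc_self.trans (hcellsub k hkk)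
    filter_upwards [ae_restrict_of_ae_restrict_of_subset hsub hfix,
      ae_restrict_mem measurableSet_Ioo] with x hfx hxm
    rw [hfx, hsim k hkk x hxm]
  -- constancy on cells i ≠ khat
  have hflat : ∀ i ∈ Finset.Icc 1 n, i ≠ khat →
      f =ᵐ[volume.restrict (Icc (alphaOf a i) (alphaOf a (i + 1)))] fun _ => β i := by
    intro i hi hine
    filter_upwards [hcell i hi] with x hx
    rw [hx, hd0 i hi hine]; ring
  have hA : 0 < a khat := ha khat hk
  -- key propagation step
  have key : ∀ u v : ℝ, u ≤ v → Icc u v ⊆ Icc (0:ℝ) 1 → ∀ c : ℝ,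
      (f =ᵐ[volume.restrict (Icc u v)] fun _ => c) →
      f =ᵐ[volume.restrict (Icc (a khat * u + alphaOf a khat) (a khat * v + alphaOf a khat))]
        fun _ => β khat + c := by
    intro u v huv hsub c hae
    have hu01 : u ∈ Icc (0:ℝ) 1 := hsub ⟨le_refl u, huv⟩
    have hv01 : v ∈ Icc (0:ℝ) 1 := hsub ⟨huv, le_refl v⟩
    have hsub2 : Icc (a khat * u + alphaOf a khat) (a khat * v + alphaOf a khat) ⊆
        Icc (alphaOf a khat) (alphaOf a (khat + 1)) := by
      intro x hx
      rw [hsucc khat hk1]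
      constructor
      · nlinarith [hx.1, hu01.1]
      · nlinarith [hx.2, hv01.2]
    -- a.e. x in the image interval, f x = β khat + f ((x - α khat)/a khat)
    have h1 : ∀ᵐ x ∂(volume.restrict (Icc (a khat * u + alphaOf a khat)
        (a khat * v + alphaOf a khat))), f x = β khat + f ((x - alphaOf a khat) / a khat) := by
      filter_upwards [ae_restrict_of_ae_restrict_of_subset hsub2 (hcell khat hk)] with x hx
      rw [hx, hdone]; ring
    -- a.e. x in the image interval, f ((x - α khat)/a khat) = c
    have hN : volume ({y | f y ≠ c} ∩ Icc u v) = 0 := by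
      have := ae_iff.mp hae
      rwa [Measure.restrict_apply' measurableSet_Icc] at this
    have h2set : {x | f ((x - alphaOf a khat) / a khat) ≠ c} ∩
        Icc (a khat * u + alphaOf a khat) (a khat * v + alphaOf a khat) ⊆
        (fun y => a khat * y + alphaOf a khat) '' ({y | f y ≠ c} ∩ Icc u v) := by
      rintro x ⟨hxf, hx1, hx2⟩
      refine ⟨(x - alphaOf a khat) / a khat, ⟨hxf, ?_, ?_⟩, by field_simp; ring⟩
      · rw [le_div_iff₀ hA]; linarith
      · rw [div_le_iff₀ hA]; linarith
    have h2 : ∀ᵐ x ∂(volume.restrict (Icc (a khat * u + alphaOf a khat)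
        (a khat * v + alphaOf a khat))), f ((x - alphaOf a khat) / a khat) = c := by
      rw [ae_iff, Measure.restrict_apply' measurableSet_Icc]
      exact measure_mono_null h2set (null_image_affine hA.ne' hN)
    filter_upwards [h1, h2] with x hx1 hx2
    rw [hx1, hx2]
  -- main induction
  intro m hm i hi hine
  obtain ⟨hi1, hin⟩ := Finset.mem_Icc.mp hi
  have haii : alphaOf a i ≤ alphaOf a (i + 1) := hmono i (i + 1) hi1 (by omega) (by omega)
  have main : ∀ j : ℕ, ∃ u v : ℝ, u ≤ v ∧ Icc u v ⊆ Icc (0:ℝ) 1 ∧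
      ((fun x => a khat * x + alphaOf a khat)^[j]) ''
        Icc (alphaOf a i) (alphaOf a (i + 1)) = Icc u v ∧
      (f =ᵐ[volume.restrict (Icc u v)] fun _ => (j : ℝ) * β khat + β i) := by
    intro j
    induction j with
    | zero =>
      refine ⟨alphaOf a i, alphaOf a (i + 1), haii, hcellsub i hi, by simp, ?_⟩
      simpa using hflat i hi hine
    | succ j ih =>
      obtain ⟨u, v, huv, hsub, him, hae⟩ := ih
      refine ⟨a khat * u + alphaOf a khat, a khat * v + alphaOf a khat, ?_, ?_, ?_, ?_⟩
      · nlinarith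
      · intro x hx
        have hu0 := (hsub ⟨le_refl u, huv⟩).1
        have hv1 := (hsub ⟨huv, le_refl v⟩).2
        have h0k : 0 ≤ alphaOf a khat := by
          have := hmono 1 khat (le_refl 1) hk1 (by omega); linarith
        have hk1le : alphaOf a khat + a khat ≤ 1 := by
          have h3 := hmono (khat + 1) (n + 1) (by omega) (by omega) (le_refl _)
          rw [hend] at h3
          linarith [hsucc khat hk1]
        constructor
        · nlinarith [hx.1]
        · nlinarith [hx.2]
      · rw [Function.iterate_succ', Set.image_comp, him]
        exact Set.image_affine_Icc' hA (alphaOf a khat) u v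
      · have := key u v huv hsub ((j : ℝ) * β khat + β i) hae
        refine this.mono fun x hx => ?_
        rw [hx]; push_cast; ring
  obtain ⟨u, v, huv, hsub, him, hae⟩ := main (m - 1)
  rw [him]
  refine hae.mono fun x hx => ?_
  rw [hx]
  have : ((m - 1 : ℕ) : ℝ) = (m : ℝ) - 1 := by
    rw [Nat.cast_sub hm, Nat.cast_one]
  rw [this]
end

section
/- Let f ∈ L_p[0,1] (1 ≤ p < ∞) be self-similar of zero spectral order with |d_{k̂}| < 1 and singular point x̂ = α_{k̂}/(1−a_{k̂}). Then f is essentially bounded on [0,1], and the essential limit of f at x̂ exists and equals β_{k̂}/(1 − d_{k̂}): for every ε > 0 there is δ > 0 such that |f(x) − β_{k̂}/(1 − d_{k̂})| < ε for almost every x ∈ [0,1] with 0 < |x − x̂| < δ. -/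
open MeasureTheory Set Filter
open scoped ENNReal NNReal

/-- Pulling back an a.e. (volume) property along the affine map `x ↦ (x - c)/A`. -/
lemma ae_affine_pullback {A c : ℝ} (hA : A ≠ 0) {P : ℝ → Prop}
    (h : ∀ᵐ y ∂(volume : Measure ℝ), P y) :
    ∀ᵐ x ∂(volume : Measure ℝ), P ((x - c) / A) := by
  rw [ae_iff] at h ⊢
  have hset : {x : ℝ | ¬P ((x - c) / A)}
      = (fun x : ℝ => x + (-c)) ⁻¹' ((fun y : ℝ => A⁻¹ * y) ⁻¹' {y | ¬P y}) := by
    ext x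
    simp [div_eq_inv_mul, sub_eq_add_neg]
  rw [hset, measure_preimage_add_right, Real.volume_preimage_mul_left (inv_ne_zero hA), h,
    mul_zero]

/-- Lower endpoint of the `m`-th nested interval around the singular point. -/
noncomputable def loF (A x : ℝ) (m : ℕ) : ℝ := x - A ^ m * x

/-- Upper endpoint of the `m`-th nested interval around the singular point. -/
noncomputable def hiF (A x : ℝ) (m : ℕ) : ℝ := x + A ^ m * (1 - x)

/-- if `|d_{k̂}| < 1`, the self-similar function of zero spectral order is
essentially bounded on `[0,1]` and has essential limit `β_{k̂}/(1 − d_{k̂})` at the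
singular point `x̂`. -/
theorem selfSimilar_zeroOrder_essBounded_and_essLimit
    (n : ℕ) (hn : 1 < n) (a d β : ℕ → ℝ)
    (ha : ∀ k ∈ Finset.Icc 1 n, 0 < a k)
    (hsum : ∑ k ∈ Finset.Icc 1 n, a k = 1)
    (p : ℝ≥0∞) (hp1 : 1 ≤ p) (hpt : p ≠ ⊤)
    (khat : ℕ) (hk : khat ∈ Finset.Icc 1 n)
    (hdk : d khat ≠ 0)
    (hd0 : ∀ k ∈ Finset.Icc 1 n, k ≠ khat → d k = 0)
    (hβ : ∃ k ∈ Finset.Icc 1 n, β k ≠ 0)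
    (hcontr : a khat * |d khat| ^ p.toReal < 1)
    (f : ℝ → ℝ) (hf : MemLp f p (volume.restrict (Set.Icc (0:ℝ) 1)))
    (hfix : f =ᵐ[volume.restrict (Set.Icc (0:ℝ) 1)] simOp n a d β f)
    (hdlt : |d khat| < 1)
    (xhat : ℝ) (hxhat : xhat = alphaOf a khat / (1 - a khat)) :
    (∃ C : ℝ, ∀ᵐ x ∂(volume.restrict (Set.Icc (0:ℝ) 1)), |f x| ≤ C) ∧
    (∀ ε > (0:ℝ), ∃ δ > (0:ℝ), ∀ᵐ x ∂(volume.restrict (Set.Icc (0:ℝ) 1)),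
      (0 < |x - xhat| ∧ |x - xhat| < δ) → |f x - β khat / (1 - d khat)| < ε) := by
  classical
  obtain ⟨hk1, hkn⟩ := Finset.mem_Icc.mp hk
  set A := a khat with hAdef
  set D := d khat with hDdef
  set L := β khat / (1 - d khat) with hLdef
  have hA0 : 0 < A := ha khat hk
  -- A < 1
  have hA1 : A < 1 := by
    have hj : (if khat = 1 then 2 else 1) ∈ Finset.Icc 1 n := by
      split <;> (apply Finset.mem_Icc.mpr; omega)
    have hjk : (if khat = 1 then 2 else 1) ≠ khat := by split <;> omega
    calc A < ∑ k ∈ Finset.Icc 1 n, a k :=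
          Finset.single_lt_sum hjk hk hj (ha _ hj) (fun k hk' _ => (ha k hk').le)
      _ = 1 := hsum
  have hD1 : D < 1 := lt_of_le_of_lt (le_abs_self _) hdlt
  have hD1' : (1 : ℝ) - D ≠ 0 := by linarith
  have hLfix : β khat + D * L = L := by
    rw [hLdef, ← hDdef]; field_simp; ring
  -- basic facts about alphaOf
  have alpha_mono : ∀ i j : ℕ, i ≤ j → j ≤ n + 1 → alphaOf a i ≤ alphaOf a j := by
    intro i j hij hj
    apply Finset.sum_le_sum_of_subset_of_nonneg (Finset.Ico_subset_Ico le_rfl hij)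
    intro k hk' _
    have := Finset.mem_Ico.mp hk'
    exact (ha k (Finset.mem_Icc.mpr ⟨this.1, by omega⟩)).le
  have alpha_succ : ∀ j : ℕ, 1 ≤ j → alphaOf a (j + 1) = alphaOf a j + a j := by
    intro j hj
    exact Finset.sum_Ico_succ_top (by omega) _
  have alpha_one : alphaOf a 1 = 0 := by simp [alphaOf]
  have alpha_top : alphaOf a (n + 1) = 1 := by
    rw [alphaOf, Finset.Ico_add_one_right_eq_Icc, hsum]
  set α := alphaOf a khat with hαdef
  have hα0 : 0 ≤ α := by
    rw [hαdef, ← alpha_one]; exact alpha_mono 1 khat hk1 (by omega)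
  have hαA1 : α + A ≤ 1 := by
    rw [← alpha_top, ← alpha_succ khat hk1]
    exact alpha_mono (khat + 1) (n + 1) (by omega) le_rfl
  have hxh0 : 0 ≤ xhat := by
    rw [hxhat]; exact div_nonneg hα0 (by linarith)
  have hxh1 : xhat ≤ 1 := by
    rw [hxhat, div_le_one (by linarith)]; linarith
  have hαx : α = xhat * (1 - A) := by
    have h1A : (1:ℝ) - A ≠ 0 := by linarith
    rw [hxhat]; field_simp
  -- the nested intervals
  set lo : ℕ → ℝ := loF A xhat with hlo
  set hi : ℕ → ℝ := hiF A xhat with hhi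
  have lo0 : lo 0 = 0 := by simp [hlo, loF]
  have hi0 : hi 0 = 1 := by simp [hhi, hiF]
  have loS : ∀ m, lo (m + 1) = α + A * lo m := by
    intro m; simp only [hlo, loF, hαx]; ring
  have hiS : ∀ m, hi (m + 1) = α + A * hi m := by
    intro m; simp only [hhi, hiF, hαx]; ring
  have lo1 : lo 1 = α := by rw [loS, lo0, mul_zero, add_zero]
  have hi1 : hi 1 = α + A := by rw [hiS, hi0, mul_one]
  have lo_mono : ∀ i j : ℕ, i ≤ j → lo i ≤ lo j := by
    intro i j hij
    have := pow_le_pow_of_le_one hA0.le hA1.le hij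
    simp only [hlo, loF]
    nlinarith
  have hi_anti : ∀ i j : ℕ, i ≤ j → hi j ≤ hi i := by
    intro i j hij
    have := pow_le_pow_of_le_one hA0.le hA1.le hij
    simp only [hhi, hiF]
    nlinarith
  -- evaluation of simOp on the open subintervals
  have simOp_eval : ∀ j ∈ Finset.Icc 1 n, ∀ x ∈ Set.Ioo (alphaOf a j) (alphaOf a (j + 1)),
      simOp n a d β f x = β j + d j * f ((x - alphaOf a j) / a j) := by
    intro j hj x hx
    obtain ⟨hj1, hjn⟩ := Finset.mem_Icc.mp hj
    unfold simOp
    rw [Finset.sum_eq_single j]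
    · exact Set.indicator_of_mem hx _
    · intro k hk' hkj
      obtain ⟨hk1', hkn'⟩ := Finset.mem_Icc.mp hk'
      apply Set.indicator_of_notMem
      intro hmem
      rcases lt_or_gt_of_ne hkj with h | h
      · have : alphaOf a (k + 1) ≤ alphaOf a j := alpha_mono _ _ (by omega) (by omega)
        have := hmem.2; have := hx.1; linarith
      · have : alphaOf a (j + 1) ≤ alphaOf a k := alpha_mono _ _ (by omega) (by omega)
        have := hmem.1; have := hx.2; linarith
    · intro h; exact absurd hj h
  set C : ℝ := (∑ k ∈ Finset.Icc 1 n, |β k|) + |L| with hCdef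
  have hC0 : 0 ≤ C := by positivity
  have h0 : ∀ᵐ x ∂(volume : Measure ℝ), x ∈ Set.Icc (0:ℝ) 1 → f x = simOp n a d β f x :=
    (ae_restrict_iff' measurableSet_Icc).mp hfix
  -- the main inductive claim
  have claim : ∀ m : ℕ, ∀ᵐ x ∂(volume : Measure ℝ),
      x ∈ Set.Icc (0:ℝ) 1 →
      (x ∈ Set.Icc (lo m) (hi m) ∧ x ∉ Set.Icc (lo (m+1)) (hi (m+1))) →
      |f x - L| ≤ |D| ^ m * C := by
    intro m
    induction m with
    | zero =>
      have hfin : ∀ᵐ x ∂(volume : Measure ℝ),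
          x ∉ (fun j => alphaOf a j) '' (Set.Icc 1 (n+1)) := by
        rw [ae_iff]
        simp only [not_not]
        exact ((Set.finite_Icc 1 (n+1)).image _).measure_zero _
      filter_upwards [h0, hfin] with x hfx hximg hx01 hring
      have hxne : ∀ j, 1 ≤ j → j ≤ n + 1 → x ≠ alphaOf a j := by
        intro j h1 h2 he
        exact hximg ⟨j, ⟨h1, h2⟩, he.symm⟩
      have hx0 : 0 < x := by
        rcases lt_or_eq_of_le hx01.1 with h | h
        · exact h
        · exact absurd (by rw [← h, alpha_one]) (hxne 1 le_rfl (by omega))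
      have hx1' : x < alphaOf a (n + 1) := by
        rw [alpha_top]
        rcases lt_or_eq_of_le hx01.2 with h | h
        · exact h
        · exact absurd (by rw [h, alpha_top]) (hxne (n+1) (by omega) le_rfl)
      -- find the subinterval containing x
      have find : ∀ m : ℕ, m ≤ n → x < alphaOf a (m + 1) →
          ∃ j ∈ Finset.Icc 1 n, x ∈ Set.Ioo (alphaOf a j) (alphaOf a (j + 1)) := by
        intro m
        induction m with
        | zero => intro _ hxa; rw [alpha_one] at hxa; linarith
        | succ m ih =>
          intro hmn hxa
          rcases lt_trichotomy x (alphaOf a (m + 1)) with h | h | h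
          · exact ih (by omega) h
          · exact absurd h (hxne (m+1) (by omega) (by omega))
          · exact ⟨m + 1, Finset.mem_Icc.mpr ⟨by omega, by omega⟩, h, hxa⟩
      obtain ⟨j, hj, hxj⟩ := find n le_rfl hx1'
      have hjk : j ≠ khat := by
        intro he
        subst he
        apply hring.2
        rw [lo1, hi1]
        constructor
        · exact le_of_lt hxj.1
        · rw [alpha_succ j (by omega)] at hxj; exact le_of_lt hxj.2
      have hfval : f x = β j := by
        rw [hfx hx01, simOp_eval j hj x hxj, hd0 j hj hjk, zero_mul, add_zero]
      rw [hfval, pow_zero, one_mul, hCdef]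
      have h1 : |β j - L| ≤ |β j| + |L| := abs_sub _ _
      have h2 : |β j| ≤ ∑ k ∈ Finset.Icc 1 n, |β k| :=
        Finset.single_le_sum (fun k _ => abs_nonneg (β k)) hj
      linarith
    | succ m ih =>
      have ihS : ∀ᵐ x ∂(volume : Measure ℝ),
          ((x - α) / A ∈ Set.Icc (0:ℝ) 1 →
          ((x - α) / A ∈ Set.Icc (lo m) (hi m) ∧ (x - α) / A ∉ Set.Icc (lo (m+1)) (hi (m+1))) →
          |f ((x - α) / A) - L| ≤ |D| ^ m * C) := ae_affine_pullback hA0.ne' ih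
      have hne1 : ∀ᵐ x ∂(volume : Measure ℝ), x ≠ α := by
        rw [ae_iff]; simpa [not_not] using measure_singleton (α : ℝ)
      have hne2 : ∀ᵐ x ∂(volume : Measure ℝ), x ≠ α + A := by
        rw [ae_iff]; simpa [not_not] using measure_singleton (α + A : ℝ)
      filter_upwards [h0, ihS, hne1, hne2] with x hfx hih hxne1 hxne2 hx01 hring
      obtain ⟨⟨hrl, hrh⟩, hrout⟩ := hring
      -- x is strictly inside (α, α + A)
      have hxα : α < x := by
        have : lo 1 ≤ lo (m + 1) := lo_mono 1 (m+1) (by omega)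
        rw [lo1] at this
        rcases lt_or_eq_of_le (le_trans this hrl) with h | h
        · exact h
        · exact absurd h.symm hxne1
      have hxαA : x < α + A := by
        have : hi (m + 1) ≤ hi 1 := hi_anti 1 (m+1) (by omega)
        rw [hi1] at this
        rcases lt_or_eq_of_le (le_trans hrh this) with h | h
        · exact h
        · exact absurd h hxne2
      set y := (x - α) / A with hydef
      have hyx : α + A * y = x := by
        rw [hydef]; field_simp; ring
      have hy01 : y ∈ Set.Icc (0:ℝ) 1 := by
        constructor
        · apply div_nonneg (by linarith) hA0.le
        · rw [div_le_one hA0]; linarith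
      have hyring : y ∈ Set.Icc (lo m) (hi m) ∧ y ∉ Set.Icc (lo (m+1)) (hi (m+1)) := by
        refine ⟨⟨?_, ?_⟩, ?_⟩
        · rw [hydef, le_div_iff₀ hA0]
          have h1 := loS m
          have h2 := mul_comm (lo m) A
          linarith
        · rw [hydef, div_le_iff₀ hA0]
          have h1 := hiS m
          have h2 := mul_comm (hi m) A
          linarith
        · intro hy
          apply hrout
          constructor
          · rw [loS]
            have := mul_le_mul_of_nonneg_left hy.1 hA0.le
            linarith
          · rw [hiS]
            have := mul_le_mul_of_nonneg_left hy.2 hA0.le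
            linarith
      have hfval : f x = β khat + D * f y := by
        rw [hfx hx01, simOp_eval khat hk x ?_]
        refine ⟨hxα, ?_⟩
        rw [alpha_succ khat hk1]; exact hxαA
      have hbound := hih hy01 hyring
      have : f x - L = D * (f y - L) := by
        rw [hfval]; linear_combination hLfix
      rw [this, abs_mul, pow_succ, mul_comm (|D| ^ m) (|D|), mul_assoc]
      exact mul_le_mul_of_nonneg_left hbound (abs_nonneg D)
  have hall : ∀ᵐ x ∂(volume : Measure ℝ), ∀ m : ℕ,
      x ∈ Set.Icc (0:ℝ) 1 →
      (x ∈ Set.Icc (lo m) (hi m) ∧ x ∉ Set.Icc (lo (m+1)) (hi (m+1))) →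
      |f x - L| ≤ |D| ^ m * C := ae_all_iff.mpr claim
  -- existence of a ring containing x
  have exists_not : ∀ x : ℝ, x ≠ xhat → ∃ m, x ∉ Set.Icc (lo m) (hi m) := by
    intro x hx
    obtain ⟨m, hm⟩ := exists_pow_lt_of_lt_one (abs_pos.mpr (sub_ne_zero.mpr hx)) hA1
    refine ⟨m, fun hmem => ?_⟩
    have hAm : (0:ℝ) ≤ A ^ m := pow_nonneg hA0.le m
    have h1 : |x - xhat| ≤ A ^ m := by
      apply abs_le.mpr
      constructor
      · have h := hmem.1
        simp only [hlo, loF] at h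
        have h2 : A ^ m * xhat ≤ A ^ m * 1 := mul_le_mul_of_nonneg_left hxh1 hAm
        rw [mul_one] at h2; linarith
      · have h := hmem.2
        simp only [hhi, hiF] at h
        have h2 : A ^ m * (1 - xhat) ≤ A ^ m * 1 := mul_le_mul_of_nonneg_left (by linarith) hAm
        rw [mul_one] at h2; linarith
    linarith
  have ring_of : ∀ x ∈ Set.Icc (0:ℝ) 1, x ≠ xhat → ∀ m0 : ℕ,
      x ∈ Set.Icc (lo m0) (hi m0) →
      ∃ m, m0 ≤ m ∧ (x ∈ Set.Icc (lo m) (hi m) ∧ x ∉ Set.Icc (lo (m+1)) (hi (m+1))) := by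
    intro x hx01 hxh m0 hm0
    have hex : ∃ m, x ∉ Set.Icc (lo m) (hi m) := exists_not x hxh
    set k := Nat.find hex with hkdef
    have hspec : x ∉ Set.Icc (lo k) (hi k) := Nat.find_spec hex
    have hklt : m0 < k := by
      by_contra hcon
      push_neg at hcon
      exact hspec ⟨le_trans (lo_mono k m0 hcon) hm0.1, le_trans hm0.2 (hi_anti k m0 hcon)⟩
    refine ⟨k - 1, by omega, ?_, ?_⟩
    · have := Nat.find_min hex (m := k - 1) (by omega)
      simpa using this
    · have : k - 1 + 1 = k := by omega
      rw [this]; exact hspec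
  have hnexh : ∀ᵐ x ∂(volume : Measure ℝ), x ≠ xhat := by
    rw [ae_iff]; simpa [not_not] using measure_singleton (xhat : ℝ)
  constructor
  · -- essential boundedness
    refine ⟨C + |L|, ?_⟩
    rw [ae_restrict_iff' measurableSet_Icc]
    filter_upwards [hall, hnexh] with x hx hxh hx01
    have hx0 : x ∈ Set.Icc (lo 0) (hi 0) := by rw [lo0, hi0]; exact hx01
    obtain ⟨m, _, hring⟩ := ring_of x hx01 hxh 0 hx0
    have hb := hx m hx01 hring
    have hDm : |D| ^ m ≤ 1 := pow_le_one₀ (abs_nonneg D) hdlt.le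
    have : |f x - L| ≤ C := by
      have h2 := mul_le_mul_of_nonneg_right hDm hC0
      rw [one_mul] at h2
      exact le_trans hb h2
    calc |f x| = |(f x - L) + L| := by ring_nf
      _ ≤ |f x - L| + |L| := abs_add_le _ _
      _ ≤ C + |L| := by linarith
  · -- essential limit
    intro ε hε
    -- choose m with |D|^m * C < ε
    have htend : Tendsto (fun m : ℕ => |D| ^ m * C) atTop (nhds 0) := by
      have := tendsto_pow_atTop_nhds_zero_of_lt_one (abs_nonneg D) hdlt
      simpa using this.mul_const C
    obtain ⟨m, hm⟩ := (htend.eventually (eventually_lt_nhds hε)).exists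
    -- choose δ
    set e0 : ℝ := min (if xhat = 0 then 1 else xhat) (if xhat = 1 then 1 else 1 - xhat) with he0
    have he0pos : 0 < e0 := by
      apply lt_min
      · split
        · norm_num
        · rcases lt_or_eq_of_le hxh0 with h | h
          · exact h
          · exact absurd h.symm (by assumption)
      · split
        · norm_num
        · rcases lt_or_eq_of_le hxh1 with h | h
          · linarith
          · exact absurd h (by assumption)
    refine ⟨A ^ m * e0, by positivity, ?_⟩
    rw [ae_restrict_iff' measurableSet_Icc]
    filter_upwards [hall] with x hx hx01 hxd
    obtain ⟨hxd0, hxdδ⟩ := hxd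
    have hxh : x ≠ xhat := sub_ne_zero.mp (abs_pos.mp hxd0)
    have hAm : (0:ℝ) < A ^ m := pow_pos hA0 m
    -- x ∈ Icc (lo m) (hi m)
    have hxm : x ∈ Set.Icc (lo m) (hi m) := by
      constructor
      · simp only [hlo, loF]
        by_cases h0' : xhat = 0
        · rw [h0']; simpa [h0'] using hx01.1
        · have he1 : e0 ≤ xhat := le_trans (min_le_left _ _) (by rw [if_neg h0'])
          have h3 : xhat - x ≤ |x - xhat| := by
            rw [abs_sub_comm]; exact le_abs_self _
          have h2 := mul_le_mul_of_nonneg_left he1 hAm.le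
          linarith
      · simp only [hhi, hiF]
        by_cases h1' : xhat = 1
        · rw [h1']; simpa [h1'] using hx01.2
        · have he1 : e0 ≤ 1 - xhat := le_trans (min_le_right _ _) (by rw [if_neg h1'])
          have h3 : x - xhat ≤ |x - xhat| := le_abs_self _
          have h2 := mul_le_mul_of_nonneg_left he1 hAm.le
          linarith
    obtain ⟨m', hmm', hring⟩ := ring_of x hx01 hxh m hxm
    have hb := hx m' hx01 hring
    have hpow : |D| ^ m' ≤ |D| ^ m := pow_le_pow_of_le_one (abs_nonneg D) hdlt.le hmm'
    have : |f x - L| ≤ |D| ^ m * C :=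
      le_trans hb (mul_le_mul_of_nonneg_right hpow hC0)
    exact lt_of_le_of_lt this hm
end

section
/- Let f ∈ L_p[0,1] (1 ≤ p < ∞) be self-similar of zero spectral order with d_{k̂} = 1 and β_{k̂} ≠ 0, and singular point x̂ = α_{k̂}/(1−a_{k̂}). Then f tends essentially to sign(β_{k̂})·(+∞) at x̂: for every M > 0 there is δ > 0 such that sign(β_{k̂})·f(x) > M for almost every x ∈ [0,1] with 0 < |x − x̂| < δ. -/
open MeasureTheory Set Filter
open scoped ENNReal NNReal

set_option maxHeartbeats 1000000 in
/-- if `d_{k̂} = 1` and `β_{k̂} ≠ 0`, the self-similar function of zero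
spectral order tends essentially to `sign(β_{k̂})·(+∞)` at the singular point `x̂`. -/
theorem selfSimilar_zeroOrder_essTendsTo_infty
    (n : ℕ) (hn : 1 < n) (a d β : ℕ → ℝ)
    (ha : ∀ k ∈ Finset.Icc 1 n, 0 < a k)
    (hsum : ∑ k ∈ Finset.Icc 1 n, a k = 1)
    (p : ℝ≥0∞) (hp1 : 1 ≤ p) (hpt : p ≠ ⊤)
    (khat : ℕ) (hk : khat ∈ Finset.Icc 1 n)
    (hdk : d khat ≠ 0)
    (hd0 : ∀ k ∈ Finset.Icc 1 n, k ≠ khat → d k = 0)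
    (hβ : ∃ k ∈ Finset.Icc 1 n, β k ≠ 0)
    (hcontr : a khat * |d khat| ^ p.toReal < 1)
    (f : ℝ → ℝ) (hf : MemLp f p (volume.restrict (Set.Icc (0:ℝ) 1)))
    (hfix : f =ᵐ[volume.restrict (Set.Icc (0:ℝ) 1)] simOp n a d β f)
    (hdone : d khat = 1) (hbk : β khat ≠ 0)
    (xhat : ℝ) (hxhat : xhat = alphaOf a khat / (1 - a khat)) :
    ∀ M > (0:ℝ), ∃ δ > (0:ℝ), ∀ᵐ x ∂(volume.restrict (Set.Icc (0:ℝ) 1)),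
      (0 < |x - xhat| ∧ |x - xhat| < δ) → Real.sign (β khat) * f x > M := by
  classical
  obtain ⟨hk1, hkn⟩ := Finset.mem_Icc.mp hk
  have ha0 : 0 < a khat := ha khat hk
  -- basic facts about alphaOf
  have hαsucc : ∀ k, 1 ≤ k → alphaOf a (k+1) = alphaOf a k + a k := by
    intro k hk1
    exact Finset.sum_Ico_succ_top hk1 a
  have hα1 : alphaOf a 1 = 0 := by simp [alphaOf]
  have hαmono : ∀ i j, 1 ≤ i → i ≤ j → j ≤ n+1 → alphaOf a i ≤ alphaOf a j := by
    intro i j h1 hij hj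
    apply Finset.sum_le_sum_of_subset_of_nonneg (Finset.Ico_subset_Ico le_rfl hij)
    intro k hkm _
    have hkm' := Finset.mem_Ico.mp hkm
    exact (ha k (Finset.mem_Icc.mpr ⟨hkm'.1, by omega⟩)).le
  have hαn1 : alphaOf a (n+1) = 1 := by
    rw [alphaOf, Finset.Ico_add_one_right_eq_Icc, hsum]
  have hα0nonneg : 0 ≤ alphaOf a khat := by
    have h := hαmono 1 khat le_rfl hk1 (by omega)
    rw [hα1] at h; exact h
  have hαsum1 : alphaOf a khat + a khat ≤ 1 := by
    rw [← hαsucc khat hk1, ← hαn1]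
    exact hαmono (khat+1) (n+1) (by omega) (by omega) le_rfl
  -- a khat < 1
  have ha0lt1 : a khat < 1 := by
    set j : ℕ := if khat = 1 then 2 else 1 with hj
    have hjmem : j ∈ Finset.Icc 1 n := by
      rw [hj]; split_ifs <;> exact Finset.mem_Icc.mpr ⟨by omega, by omega⟩
    have hjne : j ≠ khat := by rw [hj]; split_ifs with h <;> omega
    have hrest : a khat + ∑ k ∈ (Finset.Icc 1 n).erase khat, a k = 1 := by
      rw [Finset.add_sum_erase _ a hk, hsum]
    have hjpos : 0 < a j := ha j hjmem
    have hjle : a j ≤ ∑ k ∈ (Finset.Icc 1 n).erase khat, a k := by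
      apply Finset.single_le_sum (fun i hi => (ha i (Finset.mem_of_mem_erase hi)).le)
      exact Finset.mem_erase.mpr ⟨hjne, hjmem⟩
    linarith
  have h1a : (0:ℝ) < 1 - a khat := by linarith
  have h1a' : (1:ℝ) - a khat ≠ 0 := ne_of_gt h1a
  have ha0' : a khat ≠ 0 := ha0.ne'
  -- xhat facts
  have hψfix : alphaOf a khat + a khat * xhat = xhat := by
    rw [hxhat]; field_simp; ring
  have hx0 : 0 ≤ xhat := by
    rw [hxhat]; exact div_nonneg hα0nonneg h1a.le
  have hx1 : xhat ≤ 1 := by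
    rw [hxhat, div_le_one h1a]; linarith
  -- the contraction map
  set ψ : ℝ → ℝ := fun y => alphaOf a khat + a khat * y with hψ
  have hiter : ∀ m y, ψ^[m] y = xhat + a khat ^ m * (y - xhat) := by
    intro m
    induction m with
    | zero => intro y; simp
    | succ m ih =>
      intro y
      rw [Function.iterate_succ_apply', ih]
      simp only [hψ]
      linear_combination hψfix
  -- images of null sets under ψ^[m] are null
  have himg : ∀ m (S : Set ℝ), volume S = 0 → volume (ψ^[m] '' S) = 0 := by
    intro m S hS
    have heq : ψ^[m] = ⇑(AffineMap.homothety xhat (a khat ^ m)) := by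
      funext y
      rw [hiter m y, AffineMap.homothety_apply]
      simp only [smul_eq_mul, vsub_eq_sub, vadd_eq_add]
      ring
    rw [heq, Measure.addHaar_image_homothety, hS, mul_zero]
  -- the null set where the fixed point equation fails
  set N : Set ℝ := {x | x ∈ Set.Icc (0:ℝ) 1 ∧ f x ≠ simOp n a d β f x} with hN
  have hNnull : volume N = 0 := by
    have h1 : (volume.restrict (Set.Icc (0:ℝ) 1)) {x | f x ≠ simOp n a d β f x} = 0 := hfix
    rw [Measure.restrict_apply' measurableSet_Icc] at h1
    apply measure_mono_null _ h1
    intro x hx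
    exact ⟨hx.2, hx.1⟩
  set A : Set ℝ := Set.range (alphaOf a) with hA
  have hAnull : volume A = 0 := (Set.countable_range _).measure_zero _
  set B : Set ℝ := ⋃ m : ℕ, ψ^[m] '' (N ∪ A) with hB
  have hBnull : volume B = 0 :=
    measure_iUnion_null fun m => himg m _ (measure_union_null hNnull hAnull)
  -- simOp on each interval
  have hsimI : ∀ k ∈ Finset.Icc 1 n, ∀ x ∈ Set.Ioo (alphaOf a k) (alphaOf a (k+1)),
      simOp n a d β f x = β k + d k * f ((x - alphaOf a k) / a k) := by
    intro k hkm x hx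
    have hkm' := Finset.mem_Icc.mp hkm
    simp only [simOp]
    rw [Finset.sum_eq_single_of_mem k hkm]
    · rw [Set.indicator_of_mem hx]
    · intro j hj hne
      have hj' := Finset.mem_Icc.mp hj
      apply Set.indicator_of_notMem
      intro hxj
      rcases lt_or_gt_of_ne hne with h | h
      · have hle : alphaOf a (j+1) ≤ alphaOf a k :=
          hαmono (j+1) k (by omega) (by omega) (by omega)
        linarith [hx.1, hxj.2]
      · have hle : alphaOf a (k+1) ≤ alphaOf a j :=
          hαmono (k+1) j (by omega) (by omega) (by omega)
        linarith [hxj.1, hx.2]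
  -- interval inclusion: I_j ⊆ [0,1]
  have hIsub : ∀ j ∈ Finset.Icc 1 n,
      Set.Ioo (alphaOf a j) (alphaOf a (j+1)) ⊆ Set.Icc (0:ℝ) 1 := by
    intro j hj x hx
    have hj' := Finset.mem_Icc.mp hj
    have h1 : 0 ≤ alphaOf a j := by
      have h := hαmono 1 j le_rfl hj'.1 (by omega); rw [hα1] at h; exact h
    have h2 : alphaOf a (j+1) ≤ 1 := by
      rw [← hαn1]; exact hαmono (j+1) (n+1) (by omega) (by omega) le_rfl
    exact ⟨by linarith [hx.1], by linarith [hx.2]⟩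
  -- ψ maps (0,1) into I_khat ⊆ (0,1)
  have hψmem : ∀ y ∈ Set.Ioo (0:ℝ) 1, ψ y ∈ Set.Ioo (alphaOf a khat) (alphaOf a (khat+1)) := by
    intro y hy
    rw [hαsucc khat hk1]
    constructor
    · simp only [hψ]; nlinarith [mul_pos ha0 hy.1]
    · simp only [hψ]; nlinarith [hy.2, ha0]
  have hψIoo : ∀ y ∈ Set.Ioo (0:ℝ) 1, ψ y ∈ Set.Ioo (0:ℝ) 1 := by
    intro y hy
    have h := hψmem y hy
    rw [hαsucc khat hk1] at h
    exact ⟨by linarith [h.1], by linarith [h.2]⟩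
  have hψIooIt : ∀ m, ∀ y ∈ Set.Ioo (0:ℝ) 1, ψ^[m] y ∈ Set.Ioo (0:ℝ) 1 := by
    intro m
    induction m with
    | zero => intro y hy; simpa using hy
    | succ m ih =>
      intro y hy
      rw [Function.iterate_succ_apply']
      exact hψIoo _ (ih y hy)
  -- one step of the functional equation
  have hfψ : ∀ y ∈ Set.Ioo (0:ℝ) 1, ψ y ∉ N → f (ψ y) = β khat + f y := by
    intro y hy hyN
    have hmem : ψ y ∈ Set.Ioo (alphaOf a khat) (alphaOf a (khat+1)) := hψmem y hy
    have hIcc : ψ y ∈ Set.Icc (0:ℝ) 1 := hIsub khat hk hmem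
    have heq : f (ψ y) = simOp n a d β f (ψ y) := by
      by_contra hne
      exact hyN ⟨hIcc, hne⟩
    rw [heq, hsimI khat hk _ hmem, hdone, one_mul]
    congr 1
    simp only [hψ]
    rw [add_sub_cancel_left, mul_div_cancel_left₀ y ha0']
  -- iterated functional equation
  have hiterval : ∀ m, ∀ y ∈ Set.Ioo (0:ℝ) 1, (∀ i, i ≤ m → ψ^[i] y ∉ N) →
      f (ψ^[m] y) = m * β khat + f y := by
    intro m
    induction m with
    | zero => intro y hy _; simp
    | succ m ih =>
      intro y hy hgood
      rw [Function.iterate_succ_apply']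
      have h1 : ψ^[m] y ∈ Set.Ioo (0:ℝ) 1 := hψIooIt m y hy
      have h2 : ψ (ψ^[m] y) ∉ N := by
        have h3 := hgood (m+1) le_rfl
        rwa [Function.iterate_succ_apply'] at h3
      rw [hfψ _ h1 h2, ih y hy (fun i hi => hgood i (by omega))]
      push_cast; ring
  -- base value
  have hbase : ∀ j ∈ Finset.Icc 1 n, j ≠ khat →
      ∀ y ∈ Set.Ioo (alphaOf a j) (alphaOf a (j+1)), y ∉ N → f y = β j := by
    intro j hj hjne y hy hyN
    have hIcc : y ∈ Set.Icc (0:ℝ) 1 := hIsub j hj hy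
    have heq : f y = simOp n a d β f y := by
      by_contra hne
      exact hyN ⟨hIcc, hne⟩
    rw [heq, hsimI j hj y hy, hd0 j hj hjne, zero_mul, add_zero]
  -- main argument
  intro M hM
  set Bm : ℝ := ∑ j ∈ Finset.Icc 1 n, |β j| with hBm
  have hBmle : ∀ j ∈ Finset.Icc 1 n, |β j| ≤ Bm :=
    fun j hj => Finset.single_le_sum (fun i _ => abs_nonneg (β i)) hj
  have habs : 0 < |β khat| := abs_pos.mpr hbk
  obtain ⟨m0, hm0⟩ : ∃ m0 : ℕ, M + Bm < m0 * |β khat| := by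
    obtain ⟨m0, hm0⟩ := exists_nat_gt ((M + Bm) / |β khat|)
    exact ⟨m0, by rwa [div_lt_iff₀ habs] at hm0⟩
  set q : ℝ := a khat ^ m0 with hq
  have hqpos : 0 < q := pow_pos ha0 m0
  set u : ℝ := if xhat = 0 then 1 else xhat with hu
  set v : ℝ := if xhat = 1 then 1 else 1 - xhat with hv
  have hupos : 0 < u := by
    rw [hu]; split_ifs with h
    · norm_num
    · exact lt_of_le_of_ne hx0 (Ne.symm h)
  have hvpos : 0 < v := by
    rw [hv]; split_ifs with h
    · norm_num
    · exact sub_pos.mpr (lt_of_le_of_ne hx1 h)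
  set t : ℝ := min u v with ht
  have htpos : 0 < t := lt_min hupos hvpos
  refine ⟨q * t, mul_pos hqpos htpos, ?_⟩
  have haeB : ∀ᵐ x ∂(volume.restrict (Set.Icc (0:ℝ) 1)), x ∉ B :=
    ae_restrict_of_ae (measure_eq_zero_iff_ae_notMem.mp hBnull)
  filter_upwards [haeB, ae_restrict_mem measurableSet_Icc] with x hxB hxI hxd
  obtain ⟨hpos, hlt⟩ := hxd
  have hxne : x ≠ xhat := by
    intro h; rw [h, sub_self, abs_zero] at hpos; exact lt_irrefl 0 hpos
  -- x lies in ψ^[m0] '' (0,1)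
  set P : ℕ → Prop := fun m => ∃ y ∈ Set.Ioo (0:ℝ) 1, ψ^[m] y = x with hP
  have hPm0 : P m0 := by
    refine ⟨xhat + (x - xhat) / q, ⟨?_, ?_⟩, ?_⟩
    · -- lower bound: 0 < xhat + (x - xhat)/q
      by_cases h0 : xhat = 0
      · have hxpos : 0 < x := lt_of_le_of_ne hxI.1 (by rw [h0] at hxne; exact Ne.symm hxne)
        rw [h0]
        have : 0 < (x - 0) / q := div_pos (by linarith) hqpos
        linarith
      · have htu : t ≤ u := min_le_left _ _
        have hux : u = xhat := by rw [hu, if_neg h0]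
        have h3 : |x - xhat| < q * xhat := by
          calc |x - xhat| < q * t := hlt
          _ ≤ q * xhat := by rw [← hux]; exact mul_le_mul_of_nonneg_left htu hqpos.le
        have h4 : -(q * xhat) < x - xhat := by
          have := neg_abs_le (x - xhat); linarith
        have h5 : -xhat < (x - xhat) / q := by
          rw [lt_div_iff₀ hqpos]; nlinarith
        linarith
    · -- upper bound: xhat + (x - xhat)/q < 1
      by_cases h1 : xhat = 1
      · have hneg : x - xhat < 0 := by
          have : x ≤ xhat := by rw [h1]; exact hxI.2
          cases lt_or_eq_of_le this with
          | inl h => linarith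
          | inr h => exact absurd h hxne
        have hdq : (x - xhat) / q < 0 := div_neg_of_neg_of_pos hneg hqpos
        rw [h1] at hdq ⊢; linarith
      · have htv : t ≤ v := min_le_right _ _
        have hvx : v = 1 - xhat := by rw [hv, if_neg h1]
        have h3 : |x - xhat| < q * (1 - xhat) := by
          calc |x - xhat| < q * t := hlt
          _ ≤ q * (1 - xhat) := by rw [← hvx]; exact mul_le_mul_of_nonneg_left htv hqpos.le
        have h4 : x - xhat < q * (1 - xhat) := (le_abs_self _).trans_lt h3
        have h5 : (x - xhat) / q < 1 - xhat := by
          rw [div_lt_iff₀ hqpos]; nlinarith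
        linarith
    · rw [hiter, ← hq]
      field_simp
      ring
  -- bound on m with P m
  obtain ⟨K, hK⟩ : ∃ K : ℕ, a khat ^ K < |x - xhat| := exists_pow_lt_of_lt_one hpos ha0lt1
  have hPbound : ∀ m, P m → m ≤ K := by
    intro m hm
    by_contra hcon
    push_neg at hcon
    obtain ⟨y, hy, hyx⟩ := hm
    have hyd : |y - xhat| ≤ 1 :=
      abs_le.mpr ⟨by linarith [hy.1, hx1], by linarith [hy.2, hx0]⟩
    have h1 : |x - xhat| = a khat ^ m * |y - xhat| := by
      rw [← hyx, hiter, add_sub_cancel_left, abs_mul, abs_of_pos (pow_pos ha0 m)]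
    have h2 : a khat ^ m ≤ a khat ^ K :=
      pow_le_pow_of_le_one ha0.le ha0lt1.le hcon.le
    have h3 : a khat ^ m * |y - xhat| ≤ a khat ^ m := by
      have h4 := mul_le_mul_of_nonneg_left hyd (pow_pos ha0 m).le
      rwa [mul_one] at h4
    linarith
  set m : ℕ := Nat.findGreatest P K with hm
  have hPm : P m := Nat.findGreatest_spec (hPbound m0 hPm0) hPm0
  have hm0le : m0 ≤ m := Nat.le_findGreatest (hPbound m0 hPm0) hPm0
  have hnotsucc : ¬ P (m+1) := by
    by_cases hc : m + 1 ≤ K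
    · exact Nat.findGreatest_is_greatest (Nat.lt_succ_self m) hc
    · intro hp
      exact hc (by have := hPbound (m+1) hp; omega)
  clear_value m
  clear hm
  obtain ⟨y, hy01, hyx⟩ := hPm
  -- y is not in I_khat
  have hynotI : y ∉ Set.Ioo (alphaOf a khat) (alphaOf a (khat+1)) := by
    intro hyI
    apply hnotsucc
    refine ⟨(y - alphaOf a khat) / a khat, ?_, ?_⟩
    · rw [hαsucc khat hk1] at hyI
      constructor
      · exact div_pos (by linarith [hyI.1]) ha0
      · rw [div_lt_one ha0]; linarith [hyI.2]
    · rw [Function.iterate_succ_apply]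
      have hψy : ψ ((y - alphaOf a khat) / a khat) = y := by
        simp only [hψ]; field_simp; ring
      rw [hψy, hyx]
  -- goodness along the orbit
  have hygood : ∀ i, i ≤ m → ψ^[i] y ∉ N ∪ A := by
    intro i hi hmem
    apply hxB
    rw [hB]
    refine Set.mem_iUnion.mpr ⟨m - i, ⟨ψ^[i] y, hmem, ?_⟩⟩
    rw [← Function.iterate_add_apply, Nat.sub_add_cancel hi, hyx]
  have hyN : ∀ i, i ≤ m → ψ^[i] y ∉ N := fun i hi h => hygood i hi (Or.inl h)
  have hyN0 : y ∉ N := by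
    have h := hyN 0 (Nat.zero_le m)
    rwa [Function.iterate_zero_apply] at h
  have hyA : y ∉ A := by
    intro h
    have h0 := hygood 0 (Nat.zero_le m)
    rw [Function.iterate_zero_apply] at h0
    exact h0 (Or.inr h)
  -- find the interval containing y
  obtain ⟨j, hj1, hjn, hyIj⟩ :
      ∃ j, 1 ≤ j ∧ j ≤ n ∧ y ∈ Set.Ioo (alphaOf a j) (alphaOf a (j+1)) := by
    set Q : ℕ → Prop := fun j => alphaOf a j < y with hQ
    have hQ1 : Q 1 := by rw [hQ]; simp only [hα1]; exact hy01.1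
    refine ⟨Nat.findGreatest Q n, Nat.le_findGreatest hn.le hQ1, Nat.findGreatest_le n,
      Nat.findGreatest_spec hn.le hQ1, ?_⟩
    by_cases hcase : Nat.findGreatest Q n = n
    · rw [hcase, hαn1]; exact hy01.2
    · have hng : ¬ Q (Nat.findGreatest Q n + 1) :=
        Nat.findGreatest_is_greatest (Nat.lt_succ_self _)
          (by have := Nat.findGreatest_le (P := Q) n; omega)
      have hle : y ≤ alphaOf a (Nat.findGreatest Q n + 1) := le_of_not_gt hng
      have hne : y ≠ alphaOf a (Nat.findGreatest Q n + 1) := fun h => hyA ⟨_, h.symm⟩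
      exact lt_of_le_of_ne hle hne
  have hjmem : j ∈ Finset.Icc 1 n := Finset.mem_Icc.mpr ⟨hj1, hjn⟩
  have hjne : j ≠ khat := by
    intro h
    rw [h] at hyIj
    exact hynotI hyIj
  -- compute f x
  have hfy : f y = β j := hbase j hjmem hjne y hyIj hyN0
  have hfx : f x = m * β khat + β j := by
    have h := hiterval m y hy01 hyN
    rw [hyx] at h
    rw [h, hfy]
  -- final estimate
  have hsb : Real.sign (β khat) * β khat = |β khat| := by
    rcases lt_or_gt_of_ne hbk with h | h
    · rw [Real.sign_of_neg h, abs_of_neg h]; ring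
    · rw [Real.sign_of_pos h, abs_of_pos h]; ring
  have hsabs : |Real.sign (β khat)| = 1 := by
    rcases lt_or_gt_of_ne hbk with h | h
    · rw [Real.sign_of_neg h]; norm_num
    · rw [Real.sign_of_pos h]; norm_num
  have hsj : -Bm ≤ Real.sign (β khat) * β j := by
    have h1 : |Real.sign (β khat) * β j| ≤ Bm := by
      rw [abs_mul, hsabs, one_mul]; exact hBmle j hjmem
    linarith [neg_abs_le (Real.sign (β khat) * β j)]
  have hmm : (m0:ℝ) * |β khat| ≤ (m:ℝ) * |β khat| := by
    apply mul_le_mul_of_nonneg_right _ habs.le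
    exact_mod_cast hm0le
  rw [hfx]
  have hexp : Real.sign (β khat) * (↑m * β khat + β j)
      = ↑m * |β khat| + Real.sign (β khat) * β j := by
    rw [← hsb]; ring
  rw [gt_iff_lt, ← sub_pos]
  have : M < ↑m * |β khat| + Real.sign (β khat) * β j := by linarith
  rw [hexp]; linarith
end

section
/- Let f ∈ L_p[0,1] (1 ≤ p < ∞) be self-similar of zero spectral order with d_{k̂} > 1 and a_{k̂}·d_{k̂}^p < 1, and singular point x̂ = α_{k̂}/(1−a_{k̂}). If all the numbers β_{k̂}/(d_{k̂}−1) + β_j for j ≠ k̂ are strictly positive (respectively, all strictly negative), then f tends essentially to +∞ (respectively, to −∞) at x̂: for every M > 0 there is δ > 0 such that f(x) > M (respectively, f(x) < −M) for almost every x ∈ [0,1] with 0 < |x − x̂| < δ. -/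
open MeasureTheory Set Filter
open scoped ENNReal NNReal

/-- Left endpoint of the `m`-th iterate of the unit interval under `x ↦ α̂ + a x`. -/
noncomputable def t0v (xh A : ℝ) (m : ℕ) : ℝ := xh * (1 - A ^ m)

/-- Value of the self-similar function on the `m`-th level copy of interval `j`. -/
noncomputable def cval (Bh D bj : ℝ) (m : ℕ) : ℝ := Bh * (D ^ m - 1) / (D - 1) + D ^ m * bj

lemma ae_comp_affine {c t : ℝ} (hc : c ≠ 0) {P : ℝ → Prop}
    (h : ∀ᵐ y ∂(volume : Measure ℝ), P y) :
    ∀ᵐ x ∂(volume : Measure ℝ), P ((x - t) / c) := by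
  rw [ae_iff] at h ⊢
  have e : {x : ℝ | ¬ P ((x - t) / c)}
      = (fun x => x + -t) ⁻¹' ((fun y => c⁻¹ * y) ⁻¹' {y | ¬ P y}) := by
    ext x; simp [div_eq_inv_mul, sub_eq_add_neg]
  rw [e, measure_preimage_add_right, Real.volume_preimage_mul_left (inv_ne_zero hc), h, mul_zero]

/-- if `d_{k̂} > 1` (and `a_{k̂} d_{k̂}^p < 1`) and all the numbers
`β_{k̂}/(d_{k̂}−1) + β_j`, `j ≠ k̂`, are strictly positive (resp. strictly negative), then
the self-similar function of zero spectral order tends essentially to `+∞` (resp. `−∞`)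
at the singular point `x̂`. -/
theorem selfSimilar_zeroOrder_essTendsTo_pm_infty
    (n : ℕ) (hn : 1 < n) (a d β : ℕ → ℝ)
    (ha : ∀ k ∈ Finset.Icc 1 n, 0 < a k)
    (hsum : ∑ k ∈ Finset.Icc 1 n, a k = 1)
    (p : ℝ≥0∞) (hp1 : 1 ≤ p) (hpt : p ≠ ⊤)
    (khat : ℕ) (hk : khat ∈ Finset.Icc 1 n)
    (hdk : d khat ≠ 0)
    (hd0 : ∀ k ∈ Finset.Icc 1 n, k ≠ khat → d k = 0)
    (hβ : ∃ k ∈ Finset.Icc 1 n, β k ≠ 0)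
    (hcontr : a khat * |d khat| ^ p.toReal < 1)
    (f : ℝ → ℝ) (hf : MemLp f p (volume.restrict (Set.Icc (0:ℝ) 1)))
    (hfix : f =ᵐ[volume.restrict (Set.Icc (0:ℝ) 1)] simOp n a d β f)
    (hdgt : d khat > 1) (hcontr' : a khat * d khat ^ p.toReal < 1)
    (xhat : ℝ) (hxhat : xhat = alphaOf a khat / (1 - a khat)) :
    ((∀ j ∈ Finset.Icc 1 n, j ≠ khat → 0 < β khat / (d khat - 1) + β j) →
      ∀ M > (0:ℝ), ∃ δ > (0:ℝ), ∀ᵐ x ∂(volume.restrict (Set.Icc (0:ℝ) 1)),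
        (0 < |x - xhat| ∧ |x - xhat| < δ) → f x > M) ∧
    ((∀ j ∈ Finset.Icc 1 n, j ≠ khat → β khat / (d khat - 1) + β j < 0) →
      ∀ M > (0:ℝ), ∃ δ > (0:ℝ), ∀ᵐ x ∂(volume.restrict (Set.Icc (0:ℝ) 1)),
        (0 < |x - xhat| ∧ |x - xhat| < δ) → f x < -M) := by
  obtain ⟨hk1, hkn⟩ := Finset.mem_Icc.mp hk
  set A := a khat with hAdef
  have hA0 : 0 < A := ha khat hk
  -- another index besides khat
  have hj0 : ∃ j0, j0 ∈ Finset.Icc 1 n ∧ j0 ≠ khat := by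
    by_cases h1 : khat = 1
    · exact ⟨2, Finset.mem_Icc.mpr ⟨by omega, by omega⟩, by omega⟩
    · exact ⟨1, Finset.mem_Icc.mpr ⟨le_refl 1, by omega⟩, fun h => h1 h.symm⟩
  obtain ⟨j0, hj0mem, hj0ne⟩ := hj0
  have hA1 : A < 1 := by
    have herase : A + ∑ k ∈ (Finset.Icc 1 n).erase khat, a k = 1 := by
      rw [hAdef, Finset.add_sum_erase _ a hk]; exact hsum
    have hpos : 0 < ∑ k ∈ (Finset.Icc 1 n).erase khat, a k := by
      apply Finset.sum_pos'
      · intro i hi; exact (ha i (Finset.mem_of_mem_erase hi)).le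
      · exact ⟨j0, Finset.mem_erase.mpr ⟨hj0ne, hj0mem⟩, ha j0 hj0mem⟩
    linarith
  have hApow : ∀ m : ℕ, 0 < A ^ m := fun m => pow_pos hA0 m
  have hApow1 : ∀ m : ℕ, A ^ m ≤ 1 := fun m => pow_le_one₀ hA0.le hA1.le
  -- alphaOf facts
  have halpha1 : alphaOf a 1 = 0 := by simp [alphaOf]
  have halphaTop : alphaOf a (n + 1) = 1 := by
    unfold alphaOf; rw [Finset.Ico_add_one_right_eq_Icc]; exact hsum
  have hmono : ∀ {i k : ℕ}, 1 ≤ i → i ≤ k → k ≤ n + 1 → alphaOf a i ≤ alphaOf a k := by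
    intro i k h1 hik hkk
    have hsplit := Finset.sum_Ico_consecutive a h1 hik
    have hnn : 0 ≤ ∑ idx ∈ Finset.Ico i k, a idx := by
      apply Finset.sum_nonneg
      intro idx hidx
      obtain ⟨hi1, hi2⟩ := Finset.mem_Ico.mp hidx
      exact (ha idx (Finset.mem_Icc.mpr ⟨le_trans h1 hi1, by omega⟩)).le
    unfold alphaOf at *
    linarith
  have hsucc : ∀ k, 1 ≤ k → alphaOf a (k + 1) = alphaOf a k + a k := by
    intro k hk1'
    unfold alphaOf
    rw [Finset.sum_Ico_succ_top hk1']
  -- xhat facts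
  have hxe : alphaOf a khat = xhat * (1 - A) := by
    have h1A : (1:ℝ) - A ≠ 0 := by linarith
    rw [hxhat, div_mul_cancel₀ _ h1A]
  have halphahat_nonneg : 0 ≤ alphaOf a khat := halpha1 ▸ hmono (le_refl 1) hk1 (by omega)
  have halphahatA : alphaOf a khat + A ≤ 1 := by
    have := hmono (by omega : 1 ≤ khat + 1) (by omega : khat + 1 ≤ n + 1) (le_refl _)
    rw [hsucc khat hk1] at this
    rw [halphaTop] at this
    exact this
  have hx0 : 0 ≤ xhat := by
    rw [hxhat]; exact div_nonneg halphahat_nonneg (by linarith)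
  have hx1 : xhat ≤ 1 := by
    rw [hxhat, div_le_one (by linarith)]; linarith
  -- t0v facts
  have ht0succ : ∀ m, t0v xhat A (m + 1) = alphaOf a khat + A * t0v xhat A m := by
    intro m; rw [hxe]; unfold t0v; ring
  have ht0succ' : ∀ m, t0v xhat A (m + 1) = t0v xhat A m + A ^ m * alphaOf a khat := by
    intro m; rw [hxe]; unfold t0v; ring
  have ht0nonneg : ∀ m, 0 ≤ t0v xhat A m := by
    intro m; unfold t0v
    exact mul_nonneg hx0 (by linarith [hApow1 m])
  have ht0le : ∀ m, t0v xhat A m + A ^ m ≤ 1 := by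
    intro m; unfold t0v
    have hh : 0 ≤ (1 - A ^ m) * (1 - xhat) :=
      mul_nonneg (by linarith [hApow1 m]) (by linarith)
    linarith
  -- evaluation of simOp on the k-th interval
  have hkey : ∀ k ∈ Finset.Icc 1 n, ∀ x ∈ Set.Ioo (alphaOf a k) (alphaOf a (k + 1)),
      simOp n a d β f x = β k + d k * f ((x - alphaOf a k) / a k) := by
    intro k hk' x hx
    unfold simOp
    rw [Finset.sum_eq_single_of_mem k hk']
    · rw [Set.indicator_of_mem hx]
    · intro j hj hjk
      apply Set.indicator_of_notMem
      obtain ⟨hj1, hjn⟩ := Finset.mem_Icc.mp hj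
      obtain ⟨hk1', hkn'⟩ := Finset.mem_Icc.mp hk'
      intro hmem
      rcases lt_or_gt_of_ne hjk with h | h
      · have hle : alphaOf a (j + 1) ≤ alphaOf a k := hmono (by omega) (by omega) (by omega)
        have := hmem.2; have := hx.1; linarith
      · have hle : alphaOf a (k + 1) ≤ alphaOf a j := hmono (by omega) (by omega) (by omega)
        have := hmem.1; have := hx.2; linarith
  -- a.e. pointwise identity on each interval
  have haeI : ∀ k ∈ Finset.Icc 1 n, ∀ᵐ x ∂(volume : Measure ℝ),
      x ∈ Set.Ioo (alphaOf a k) (alphaOf a (k + 1)) →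
        f x = β k + d k * f ((x - alphaOf a k) / a k) := by
    intro k hk'
    have h0 := (ae_restrict_iff' measurableSet_Icc).mp hfix
    filter_upwards [h0] with x hx hmem
    obtain ⟨hk1', hkn'⟩ := Finset.mem_Icc.mp hk'
    have hxl : (0:ℝ) ≤ x := by
      have := halpha1 ▸ hmono (le_refl 1) hk1' (by omega)
      linarith [hmem.1]
    have hxr : x ≤ 1 := by
      have := halphaTop ▸ hmono (by omega : 1 ≤ k + 1) (by omega : k + 1 ≤ n + 1) (le_refl _)
      linarith [hmem.2]
    rw [hx ⟨hxl, hxr⟩, hkey k hk' x hmem]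
  -- main induction on levels
  have hDne : d khat - 1 ≠ 0 := by linarith
  have haeM : ∀ m : ℕ, ∀ j, j ∈ Finset.Icc 1 n → j ≠ khat →
      ∀ᵐ x ∂(volume : Measure ℝ),
        ((x - t0v xhat A m) / A ^ m ∈ Set.Ioo (alphaOf a j) (alphaOf a (j + 1)) →
          f x = cval (β khat) (d khat) (β j) m) := by
    intro m
    induction m with
    | zero =>
      intro j hj hjk
      filter_upwards [haeI j hj] with x hx hmem
      have hex : (x - t0v xhat A 0) / A ^ 0 = x := by
        unfold t0v; simp
      rw [hex] at hmem
      rw [hx hmem, hd0 j hj hjk]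
      unfold cval; simp
    | succ m ih =>
      intro j hj hjk
      have ihj := ih j hj hjk
      have htrans := ae_comp_affine (c := A) (t := alphaOf a khat) hA0.ne' ihj
      filter_upwards [htrans, haeI khat hk] with x htr hkh hmem
      obtain ⟨hj1, hjn⟩ := Finset.mem_Icc.mp hj
      -- the rescaled point
      have hwpos : 0 < (x - t0v xhat A (m + 1)) / A ^ (m + 1) := by
        have h0 : alphaOf a 1 ≤ alphaOf a j := hmono (le_refl 1) hj1 (by omega)
        rw [halpha1] at h0
        linarith [hmem.1]
      have hwlt : (x - t0v xhat A (m + 1)) / A ^ (m + 1) < 1 := by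
        have h1 : alphaOf a (j + 1) ≤ alphaOf a (n + 1) :=
          hmono (by omega) (by omega) (le_refl _)
        rw [halphaTop] at h1
        linarith [hmem.2]
      set w := (x - t0v xhat A (m + 1)) / A ^ (m + 1) with hwdef
      have hxw : x = t0v xhat A (m + 1) + A ^ (m + 1) * w := by
        rw [hwdef]; field_simp; ring
      -- x lies in the khat interval
      have hxalt : x = alphaOf a khat + A * (t0v xhat A m + A ^ m * w) := by
        rw [hxw, ht0succ m, pow_succ]; ring
      have hs1 : 0 < t0v xhat A m + A ^ m * w := by
        have h1 := mul_pos (hApow m) hwpos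
        linarith [ht0nonneg m]
      have hs2 : t0v xhat A m + A ^ m * w < 1 := by
        have h1 : A ^ m * w < A ^ m * 1 := mul_lt_mul_of_pos_left hwlt (hApow m)
        linarith [ht0le m]
      have hxI : x ∈ Set.Ioo (alphaOf a khat) (alphaOf a (khat + 1)) := by
        rw [hsucc khat hk1]
        constructor
        · rw [hxalt]
          have := mul_pos hA0 hs1
          linarith
        · rw [hxalt]
          have := mul_lt_mul_of_pos_left hs2 hA0
          linarith
      -- arithmetic: the doubly-rescaled point
      have hrw : ((x - alphaOf a khat) / A - t0v xhat A m) / A ^ m = w := by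
        rw [hwdef, ht0succ m]
        field_simp
        ring
      have hfψ : f ((x - alphaOf a khat) / A) = cval (β khat) (d khat) (β j) m := by
        apply htr
        rw [hrw]
        exact hmem
      rw [hkh hxI, hfψ]
      unfold cval
      field_simp
      ring
  -- combine all a.e. statements
  have haeAll : ∀ᵐ x ∂(volume : Measure ℝ), ∀ m j : ℕ, j ∈ Finset.Icc 1 n → j ≠ khat →
      ((x - t0v xhat A m) / A ^ m ∈ Set.Ioo (alphaOf a j) (alphaOf a (j + 1)) →
        f x = cval (β khat) (d khat) (β j) m) := by
    rw [ae_all_iff]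
    intro m
    rw [ae_all_iff]
    intro j
    by_cases hj : j ∈ Finset.Icc 1 n
    · by_cases hjk : j ≠ khat
      · filter_upwards [haeM m j hj hjk] with x hx _ _; exact hx
      · filter_upwards with x h1 h2; exact absurd h2 hjk
    · filter_upwards with x h1; exact absurd h1 hj
  -- avoid the countable set of iterated breakpoints
  have hBad : ∀ᵐ x ∂(volume : Measure ℝ), ∀ m j : ℕ,
      x ≠ t0v xhat A m + A ^ m * alphaOf a j := by
    have hc : Set.Countable {x : ℝ | ∃ m j : ℕ, x = t0v xhat A m + A ^ m * alphaOf a j} := by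
      have hsub : {x : ℝ | ∃ m j : ℕ, x = t0v xhat A m + A ^ m * alphaOf a j} ⊆
          Set.range (fun p : ℕ × ℕ => t0v xhat A p.1 + A ^ p.1 * alphaOf a p.2) := by
        rintro x ⟨m, j, rfl⟩; exact ⟨(m, j), rfl⟩
      exact (Set.countable_range _).mono hsub
    have h0 := hc.measure_zero (volume : Measure ℝ)
    rw [ae_iff]
    refine measure_mono_null ?_ h0
    intro x hx
    simp only [Set.mem_setOf_eq] at hx ⊢
    push_neg at hx
    exact hx
  -- positivity of width parameter
  set ε : ℝ := if xhat = 0 ∨ xhat = 1 then 1 else min xhat (1 - xhat) with hεdef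
  have hε : 0 < ε := by
    rw [hεdef]
    split
    · exact one_pos
    · next h =>
      push_neg at h
      have h1 : 0 < xhat := lt_of_le_of_ne hx0 (Ne.symm h.1)
      have h2 : xhat < 1 := lt_of_le_of_ne hx1 h.2
      exact lt_min h1 (by linarith)
  -- the deterministic locating argument
  have hfind : ∀ m₀ : ℕ, ∀ x : ℝ, x ∈ Set.Icc (0:ℝ) 1 →
      (∀ m j : ℕ, x ≠ t0v xhat A m + A ^ m * alphaOf a j) →
      0 < |x - xhat| → |x - xhat| < A ^ m₀ * ε →
      ∃ m, m₀ ≤ m ∧ ∃ j, (j ∈ Finset.Icc 1 n ∧ j ≠ khat) ∧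
        ((x - t0v xhat A m) / A ^ m ∈ Set.Ioo (alphaOf a j) (alphaOf a (j + 1))) := by
    intro m₀ x hIcc hbad habs0 habsδ
    obtain ⟨hxl, hxr⟩ := hIcc
    have hxne : x ≠ xhat := by
      intro h; rw [h] at habs0; simp at habs0
    set Pm : ℕ → Prop := fun k => t0v xhat A k < x ∧ x < t0v xhat A k + A ^ k with hPmdef
    -- base membership
    have hP0 : Pm m₀ := by
      rw [hPmdef]
      have habs := abs_lt.mp habsδ
      constructor
      · -- lower bound
        by_cases h0 : xhat = 0
        · unfold t0v; rw [h0]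
          simp only [zero_mul]
          rw [h0] at hxne
          cases lt_or_eq_of_le hxl with
          | inl h => exact h
          | inr h => exact absurd h.symm hxne
        · have hεle : ε ≤ xhat := by
            rw [hεdef]
            split
            · next hcase =>
              rcases hcase with h | h
              · exact absurd h h0
              · exact h.ge
            · exact min_le_left _ _
          unfold t0v
          have h1 : -(A ^ m₀ * ε) < x - xhat := habs.1
          have h2 : A ^ m₀ * ε ≤ A ^ m₀ * xhat :=
            mul_le_mul_of_nonneg_left hεle (hApow m₀).le
          linarith
      · -- upper bound
        by_cases h1' : xhat = 1
        · unfold t0v; rw [h1']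
          rw [h1'] at hxne
          have : x < 1 := lt_of_le_of_ne hxr hxne
          linarith
        · have hεle : ε ≤ 1 - xhat := by
            rw [hεdef]
            split
            · next hcase =>
              rcases hcase with h | h
              · rw [h]; norm_num
              · exact absurd h h1'
            · exact min_le_right _ _
          unfold t0v
          have h1 : x - xhat < A ^ m₀ * ε := habs.2
          have h2 : A ^ m₀ * ε ≤ A ^ m₀ * (1 - xhat) :=
            mul_le_mul_of_nonneg_left hεle (hApow m₀).le
          linarith
    -- Pm bounds the distance
    have hPabs : ∀ k, Pm k → |x - xhat| < A ^ k := by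
      intro k hP
      rw [hPmdef] at hP
      unfold t0v at hP
      rw [abs_lt]
      have e1 : 0 ≤ xhat * A ^ k := mul_nonneg hx0 (hApow k).le
      have e2 : xhat * A ^ k ≤ A ^ k := mul_le_of_le_one_left (hApow k).le hx1
      constructor
      · linarith [hP.1]
      · linarith [hP.2]
    -- Pm is antitone
    have hstep : ∀ k, Pm (k + 1) → Pm k := by
      intro k hP
      rw [hPmdef] at hP ⊢
      have e1 := ht0succ' k
      have e2 : A ^ (k + 1) = A ^ k * A := pow_succ A k
      have e3 : 0 ≤ A ^ k * alphaOf a khat := mul_nonneg (hApow k).le halphahat_nonneg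
      constructor
      · have := hP.1
        linarith
      · have := hP.2
        have h4 : 0 ≤ A ^ k * (1 - A) * (1 - xhat) :=
          mul_nonneg (mul_nonneg (hApow k).le (by linarith)) (by linarith)
        have h3 : t0v xhat A (k+1) + A ^ (k+1) ≤ t0v xhat A k + A ^ k := by
          rw [e1, e2, hxe]
          linarith
        linarith
    have hPdown : ∀ k i, i ≤ k → Pm k → Pm i := by
      intro k
      induction k with
      | zero =>
        intro i hi hP
        have : i = 0 := Nat.le_zero.mp hi
        rw [this]; exact hP
      | succ k ihk =>
        intro i hi hP
        rcases Nat.lt_or_ge i (k + 1) with h | h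
        · exact ihk i (by omega) (hstep k hP)
        · have : i = k + 1 := by omega
          rw [this]; exact hP
    -- maximal level
    obtain ⟨m1, hm1⟩ := exists_pow_lt_of_lt_one habs0 hA1
    have hne : ∃ k, ¬ Pm k := ⟨m1, fun hP => absurd (hPabs m1 hP) (not_lt.mpr hm1.le)⟩
    have hm0lt : m₀ < Nat.find hne := by
      by_contra h
      push_neg at h
      exact (Nat.find_spec hne) (hPdown m₀ (Nat.find hne) h hP0)
    set m := Nat.find hne - 1 with hmdef
    have hPm : Pm m := not_not.mp (Nat.find_min hne (by omega))
    have hnPm : ¬ Pm (m + 1) := by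
      have : m + 1 = Nat.find hne := by omega
      rw [this]; exact Nat.find_spec hne
    have hmge : m₀ ≤ m := by omega
    -- the rescaled point y
    set y := (x - t0v xhat A m) / A ^ m with hydef
    have hy0 : 0 < y := div_pos (by linarith [hPm.1]) (hApow m)
    have hy1 : y < 1 := (div_lt_one (hApow m)).mpr (by linarith [hPm.2])
    have hxy : x = t0v xhat A m + A ^ m * y := by
      rw [hydef]; field_simp; ring
    have hyne : ∀ j : ℕ, y ≠ alphaOf a j := by
      intro j hyj
      exact hbad m j (by rw [hxy, hyj])
    -- find the interval containing y
    set j := Nat.findGreatest (fun j => alphaOf a j < y) n with hjdef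
    have hj1 : 1 ≤ j :=
      Nat.le_findGreatest hn.le (show alphaOf a 1 < y by rw [halpha1]; exact hy0)
    have hjn : j ≤ n := Nat.findGreatest_le n
    have hjy : alphaOf a j < y := by
      have h := Nat.findGreatest_spec (P := fun i => alphaOf a i < y) (m := 1) hn.le
        (show alphaOf a 1 < y by rw [halpha1]; exact hy0)
      rw [hjdef]
      exact h
    have hyj1 : y < alphaOf a (j + 1) := by
      by_cases hjeq : j = n
      · rw [hjeq, halphaTop]; exact hy1
      · have hgt := Nat.findGreatest_is_greatest (P := fun j => alphaOf a j < y)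
          (k := j + 1) (by rw [← hjdef]; omega) (by omega)
        have : y ≤ alphaOf a (j + 1) := not_lt.mp hgt
        exact lt_of_le_of_ne this (hyne (j + 1))
    have hjk : j ≠ khat := by
      intro hjkh
      apply hnPm
      rw [hPmdef]
      have h1 : alphaOf a khat < y := hjkh ▸ hjy
      have h2 : y < alphaOf a khat + A := by
        have := hyj1
        rw [hjkh, hsucc khat hk1] at this
        exact this
      constructor
      · rw [ht0succ' m, hxy]
        linarith [mul_lt_mul_of_pos_left h1 (hApow m)]
      · rw [ht0succ' m, hxy, pow_succ]
        linarith [mul_lt_mul_of_pos_left h2 (hApow m)]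
    exact ⟨m, hmge, j, ⟨Finset.mem_Icc.mpr ⟨hj1, hjn⟩, hjk⟩, hjy, hyj1⟩
  -- value formula
  have hcval : ∀ (bj : ℝ) (m : ℕ), cval (β khat) (d khat) bj m
      = d khat ^ m * (β khat / (d khat - 1) + bj) - β khat / (d khat - 1) := by
    intro bj m
    unfold cval
    field_simp
    ring
  have hDpow : ∀ m₀ m : ℕ, m₀ ≤ m → d khat ^ m₀ ≤ d khat ^ m :=
    fun m₀ m h => pow_le_pow_right₀ hdgt.le h
  set C := β khat / (d khat - 1) with hCdef
  have hJne : ((Finset.Icc 1 n).erase khat).Nonempty :=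
    ⟨j0, Finset.mem_erase.mpr ⟨hj0ne, hj0mem⟩⟩
  constructor
  · -- positive case
    intro hpos M hM
    set η := ((Finset.Icc 1 n).erase khat).inf' hJne (fun j => C + β j) with hηdef
    have hη : 0 < η := by
      rw [hηdef, Finset.lt_inf'_iff]
      intro j hj
      obtain ⟨hjne, hjmem⟩ := Finset.mem_erase.mp hj
      exact hpos j hjmem hjne
    obtain ⟨m₀, hm₀⟩ := pow_unbounded_of_one_lt ((M + |C|) / η) hdgt
    refine ⟨A ^ m₀ * ε, by positivity, ?_⟩
    rw [ae_restrict_iff' measurableSet_Icc]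
    filter_upwards [haeAll, hBad] with x hall hbad hIcc habs
    obtain ⟨habs0, habsδ⟩ := habs
    obtain ⟨m, hm, j, ⟨hjmem, hjk⟩, hmemI⟩ := hfind m₀ x hIcc hbad habs0 habsδ
    have hval := hall m j hjmem hjk hmemI
    rw [hval, hcval]
    have hCβ : η ≤ C + β j := by
      rw [hηdef]
      exact Finset.inf'_le (fun i => C + β i) (Finset.mem_erase.mpr ⟨hjk, hjmem⟩)
    have h1 : M + |C| < d khat ^ m₀ * η := (div_lt_iff₀ hη).mp hm₀
    have h2 : d khat ^ m₀ * η ≤ d khat ^ m * η :=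
      mul_le_mul_of_nonneg_right (hDpow m₀ m hm) hη.le
    have h3 : d khat ^ m * η ≤ d khat ^ m * (C + β j) :=
      mul_le_mul_of_nonneg_left hCβ (pow_nonneg (by linarith) m)
    have h4 : C ≤ |C| := le_abs_self C
    linarith
  · -- negative case
    intro hneg M hM
    set η := ((Finset.Icc 1 n).erase khat).sup' hJne (fun j => C + β j) with hηdef
    have hη : η < 0 := by
      rw [hηdef, Finset.sup'_lt_iff]
      intro j hj
      obtain ⟨hjne, hjmem⟩ := Finset.mem_erase.mp hj
      exact hneg j hjmem hjne
    obtain ⟨m₀, hm₀⟩ := pow_unbounded_of_one_lt ((M + |C|) / (-η)) hdgt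
    refine ⟨A ^ m₀ * ε, by positivity, ?_⟩
    rw [ae_restrict_iff' measurableSet_Icc]
    filter_upwards [haeAll, hBad] with x hall hbad hIcc habs
    obtain ⟨habs0, habsδ⟩ := habs
    obtain ⟨m, hm, j, ⟨hjmem, hjk⟩, hmemI⟩ := hfind m₀ x hIcc hbad habs0 habsδ
    have hval := hall m j hjmem hjk hmemI
    rw [hval, hcval]
    have hCβ : C + β j ≤ η := by
      rw [hηdef]
      exact Finset.le_sup' (fun i => C + β i) (Finset.mem_erase.mpr ⟨hjk, hjmem⟩)
    have h1 : M + |C| < d khat ^ m₀ * (-η) := (div_lt_iff₀ (by linarith)).mp hm₀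
    have h2 : d khat ^ m₀ * (-η) ≤ d khat ^ m * (-η) :=
      mul_le_mul_of_nonneg_right (hDpow m₀ m hm) (by linarith)
    have h3 : d khat ^ m * (C + β j) ≤ d khat ^ m * η :=
      mul_le_mul_of_nonneg_left hCβ (pow_nonneg (by linarith) m)
    have h4 : -C ≤ |C| := neg_le_abs C
    linarith
end
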